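/- Let S have (p,δ)-structure with characteristics (κ₀, κ₁, p) for some p ∈ (1,∞) and δ ≥ 0. Then there exist constants c, C > 0 depending only on the characteristics (κ₀, κ₁, p) of S such that for all P, Q ∈ ℝ^{3×3}: c·φ_{|P^sym|}(|P^sym − Q^sym|) ≤ (S(P) − S(Q))·(P − Q) ≤ C·φ_{|P^sym|}(|P^sym − Q^sym|), where φ_a denotes the shifted N-function of φ = φ_{p,δ}. -/

import Mathlib

noncomputable section

open Matrix

attribute [local instance] Matrix.normedAddCommGroup Matrix.normedSpace

/-- 3×3 real matrices. -/
abbrev Mat3 := Matrix (Fin 3) (Fin 3) ℝ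

/-- The symmetric part `P^sym = (P + Pᵀ)/2` of a matrix. -/
def msym (P : Mat3) : Mat3 := (1 / 2 : ℝ) • (P + Pᵀ)

/-- The scalar product of tensors `A·B = Σ_{i,j} A_{ij} B_{ij}`. -/
def mdot (A B : Mat3) : ℝ := ∑ i, ∑ j, A i j * B i j

/-- The Euclidean (Frobenius) norm `|A| = √(A·A)`. -/
def mnorm (A : Mat3) : ℝ := Real.sqrt (mdot A A)

/-- The N-function `φ_{p,δ}(t) = ∫₀ᵗ (δ+s)^{p-2} s ds`. -/
def phi (p δ t : ℝ) : ℝ := ∫ s in (0:ℝ)..t, (δ + s) ^ (p - 2) * s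

/-- Its first derivative `φ'(t) = (δ+t)^{p-2} t`. -/
def phi' (p δ t : ℝ) : ℝ := (δ + t) ^ (p - 2) * t

/-- Its second derivative `φ''(t) = (p-2)(δ+t)^{p-3} t + (δ+t)^{p-2}` (for `t > 0`). -/
def phi'' (p δ t : ℝ) : ℝ := (p - 2) * (δ + t) ^ (p - 3) * t + (δ + t) ^ (p - 2)

/-- The partial derivative `∂_{kl} S_{ij}(P)` of the `(i,j)` component of `S`
with respect to the `(k,l)` matrix entry. -/
def DS (S : Mat3 → Mat3) (P : Mat3) (k l i j : Fin 3) : ℝ :=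
  fderiv ℝ S P (Matrix.single k l 1) i j

/-- A tensor field `S` has `(p,δ)`-structure with characteristics `(κ₀, κ₁, p)`. -/
structure PDelta (p δ κ₀ κ₁ : ℝ) (S : Mat3 → Mat3) : Prop where
  cont : Continuous S
  smooth : ContDiffOn ℝ 1 S {(0 : Mat3)}ᶜ
  symval : ∀ P, (S P)ᵀ = S P
  symdep : ∀ P, S P = S (msym P)
  zero : S 0 = 0
  lower : ∀ P Q : Mat3, msym P ≠ 0 →
    κ₀ * phi'' p δ (mnorm (msym P)) * (mnorm (msym Q)) ^ 2 ≤
      ∑ i, ∑ j, ∑ k, ∑ l, DS S P k l i j * Q i j * Q k l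
  upper : ∀ P : Mat3, msym P ≠ 0 → ∀ i j k l : Fin 3,
    |DS S P k l i j| ≤ κ₁ * phi'' p δ (mnorm (msym P))

/-- The tensor field `F(P) = (δ + |P^sym|)^{(p-2)/2} P^sym` associated to `S`. -/
def Fassoc (p δ : ℝ) (P : Mat3) : Mat3 :=
  (δ + mnorm (msym P)) ^ ((p - 2) / 2) • msym P

/-- The shifted N-function `φ_a(t) = ∫₀ᵗ φ'(a+s)·s/(a+s) ds`. -/
def phiShift (p δ a t : ℝ) : ℝ := ∫ s in (0:ℝ)..t, phi' p δ (a + s) * s / (a + s)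

namespace Hammer

open MeasureTheory intervalIntegral Set Real

/-! ### Basic facts about `mdot`, `mnorm`, `msym` -/

lemma mdot_comm (A B : Mat3) : mdot A B = mdot B A := by
  unfold mdot
  exact Finset.sum_congr rfl fun i _ => Finset.sum_congr rfl fun j _ => mul_comm _ _

lemma mdot_self_nonneg (A : Mat3) : 0 ≤ mdot A A :=
  Finset.sum_nonneg fun i _ => Finset.sum_nonneg fun j _ => mul_self_nonneg _

lemma mnorm_nonneg (A : Mat3) : 0 ≤ mnorm A := Real.sqrt_nonneg _

lemma mnorm_sq (A : Mat3) : mnorm A ^ 2 = mdot A A := Real.sq_sqrt (mdot_self_nonneg A)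

lemma mdot_sub_left (A B C : Mat3) : mdot (A - B) C = mdot A C - mdot B C := by
  unfold mdot
  rw [← Finset.sum_sub_distrib]
  refine Finset.sum_congr rfl fun i _ => ?_
  rw [← Finset.sum_sub_distrib]
  exact Finset.sum_congr rfl fun j _ => by simp [Matrix.sub_apply, sub_mul]

lemma mdot_add_right (A B C : Mat3) : mdot A (B + C) = mdot A B + mdot A C := by
  unfold mdot
  rw [← Finset.sum_add_distrib]
  refine Finset.sum_congr rfl fun i _ => ?_
  rw [← Finset.sum_add_distrib]
  exact Finset.sum_congr rfl fun j _ => by simp [Matrix.add_apply, mul_add]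

lemma mdot_smul_right (A : Mat3) (t : ℝ) (B : Mat3) : mdot A (t • B) = t * mdot A B := by
  unfold mdot
  rw [Finset.mul_sum]
  refine Finset.sum_congr rfl fun i _ => ?_
  rw [Finset.mul_sum]
  exact Finset.sum_congr rfl fun j _ => by simp [Matrix.smul_apply, smul_eq_mul]; ring

lemma mdot_neg_neg (A B : Mat3) : mdot (-A) (-B) = mdot A B := by
  unfold mdot
  exact Finset.sum_congr rfl fun i _ => Finset.sum_congr rfl fun j _ => by
    simp [Matrix.neg_apply]

lemma mnorm_neg (A : Mat3) : mnorm (-A) = mnorm A := by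
  unfold mnorm; rw [mdot_neg_neg]

lemma mnorm_sub_comm (A B : Mat3) : mnorm (A - B) = mnorm (B - A) := by
  rw [← mnorm_neg (A - B), neg_sub]

lemma mdot_eq_sum_prod (A B : Mat3) :
    mdot A B = ∑ x : Fin 3 × Fin 3, A x.1 x.2 * B x.1 x.2 := by
  rw [Fintype.sum_prod_type]; rfl

lemma mnorm_eq_zero {A : Mat3} (h : mnorm A = 0) : A = 0 := by
  have h2 : mdot A A = 0 := le_antisymm (Real.sqrt_eq_zero'.mp h) (mdot_self_nonneg A)
  rw [mdot_eq_sum_prod] at h2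
  have := (Finset.sum_eq_zero_iff_of_nonneg (fun x _ => mul_self_nonneg (A x.1 x.2))).mp h2
  ext i j
  have := this (i, j) (Finset.mem_univ _)
  simpa [mul_self_eq_zero] using this

lemma mnorm_pos {A : Mat3} (h : A ≠ 0) : 0 < mnorm A :=
  lt_of_le_of_ne (mnorm_nonneg A) fun h' => h (mnorm_eq_zero h'.symm)

lemma mdot_le (A B : Mat3) : |mdot A B| ≤ mnorm A * mnorm B := by
  rw [mdot_eq_sum_prod]
  have cs := Finset.sum_mul_sq_le_sq_mul_sq Finset.univ (fun x : Fin 3 × Fin 3 => A x.1 x.2)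
    (fun x => B x.1 x.2)
  have h1 : (∑ x : Fin 3 × Fin 3, A x.1 x.2 ^ 2) = mdot A A := by
    rw [mdot_eq_sum_prod]; exact Finset.sum_congr rfl fun x _ => sq (A x.1 x.2) ▸ (sq (A x.1 x.2)).symm ▸ by ring
  have h2 : (∑ x : Fin 3 × Fin 3, B x.1 x.2 ^ 2) = mdot B B := by
    rw [mdot_eq_sum_prod]; exact Finset.sum_congr rfl fun x _ => by ring
  rw [h1, h2] at cs
  have : |∑ x : Fin 3 × Fin 3, A x.1 x.2 * B x.1 x.2| =
      Real.sqrt ((∑ x : Fin 3 × Fin 3, A x.1 x.2 * B x.1 x.2) ^ 2) :=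
    (Real.sqrt_sq_eq_abs _).symm
  rw [this]
  calc Real.sqrt ((∑ x : Fin 3 × Fin 3, A x.1 x.2 * B x.1 x.2) ^ 2)
      ≤ Real.sqrt (mdot A A * mdot B B) := Real.sqrt_le_sqrt cs
    _ = mnorm A * mnorm B := Real.sqrt_mul (mdot_self_nonneg A) _

lemma mnorm_add_le (A B : Mat3) : mnorm (A + B) ≤ mnorm A + mnorm B := by
  have expand : mdot (A + B) (A + B) = mdot A A + 2 * mdot A B + mdot B B := by
    rw [mdot_eq_sum_prod, mdot_eq_sum_prod, mdot_eq_sum_prod, mdot_eq_sum_prod,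
      Finset.mul_sum, ← Finset.sum_add_distrib, ← Finset.sum_add_distrib]
    exact Finset.sum_congr rfl fun x _ => by simp [Matrix.add_apply]; ring
  have hAB : mdot A B ≤ mnorm A * mnorm B := (abs_le.mp (mdot_le A B)).2
  have : mdot (A + B) (A + B) ≤ (mnorm A + mnorm B) ^ 2 := by
    rw [expand]
    have hA := mnorm_sq A; have hB := mnorm_sq B
    nlinarith [mnorm_nonneg A, mnorm_nonneg B]
  calc mnorm (A + B) = Real.sqrt (mdot (A + B) (A + B)) := rfl
    _ ≤ Real.sqrt ((mnorm A + mnorm B) ^ 2) := Real.sqrt_le_sqrt this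
    _ = |mnorm A + mnorm B| := Real.sqrt_sq_eq_abs _
    _ = mnorm A + mnorm B := abs_of_nonneg (add_nonneg (mnorm_nonneg A) (mnorm_nonneg B))

lemma mnorm_sub_le (A B C : Mat3) : mnorm (A - C) ≤ mnorm (A - B) + mnorm (B - C) := by
  have : A - C = (A - B) + (B - C) := by abel
  rw [this]; exact mnorm_add_le _ _

lemma mnorm_smul (t : ℝ) (A : Mat3) : mnorm (t • A) = |t| * mnorm A := by
  have : mdot (t • A) (t • A) = t ^ 2 * mdot A A := by
    unfold mdot
    rw [Finset.mul_sum]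
    refine Finset.sum_congr rfl fun i _ => ?_
    rw [Finset.mul_sum]
    exact Finset.sum_congr rfl fun j _ => by simp [Matrix.smul_apply, smul_eq_mul]; ring
  unfold mnorm
  rw [this, Real.sqrt_mul (sq_nonneg t), Real.sqrt_sq_eq_abs]

lemma sum_abs_sq_le (D : Mat3) : (∑ i, ∑ j, |D i j|) ^ 2 ≤ 9 * mnorm D ^ 2 := by
  have h1 : (∑ i, ∑ j, |D i j|) = ∑ x : Fin 3 × Fin 3, |D x.1 x.2| := by
    rw [Fintype.sum_prod_type]
  rw [h1, mnorm_sq, mdot_eq_sum_prod]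
  have h := sq_sum_le_card_mul_sum_sq (s := (Finset.univ : Finset (Fin 3 × Fin 3)))
    (f := fun x => |D x.1 x.2|)
  simp only [Finset.card_univ, Fintype.card_prod, Fintype.card_fin] at h
  calc (∑ x : Fin 3 × Fin 3, |D x.1 x.2|) ^ 2 ≤ ((9 : ℕ) : ℝ) * ∑ x : Fin 3 × Fin 3, |D x.1 x.2| ^ 2 := by
        exact_mod_cast h
    _ = 9 * ∑ x : Fin 3 × Fin 3, |D x.1 x.2| ^ 2 := by norm_num
    _ = 9 * ∑ x : Fin 3 × Fin 3, D x.1 x.2 * D x.1 x.2 := by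
        congr 1
        exact Finset.sum_congr rfl fun x _ => by rw [sq_abs, sq]

lemma abs_entry_le_mnorm (D : Mat3) (i j : Fin 3) : |D i j| ≤ mnorm D := by
  have h : D i j ^ 2 ≤ mdot D D := by
    rw [mdot_eq_sum_prod]
    have := Finset.single_le_sum (f := fun x : Fin 3 × Fin 3 => D x.1 x.2 * D x.1 x.2)
      (fun x _ => mul_self_nonneg _) (Finset.mem_univ (i, j))
    simpa [sq] using this
  calc |D i j| = Real.sqrt (D i j ^ 2) := (Real.sqrt_sq_eq_abs _).symm
    _ ≤ Real.sqrt (mdot D D) := Real.sqrt_le_sqrt h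
    _ = mnorm D := rfl

lemma msym_transpose (P : Mat3) : (msym P)ᵀ = msym P := by
  unfold msym
  rw [transpose_smul, transpose_add, transpose_transpose, add_comm]

lemma msym_eq_self {P : Mat3} (h : Pᵀ = P) : msym P = P := by
  unfold msym
  rw [h, ← two_smul ℝ P, smul_smul]
  norm_num

lemma msym_msym (P : Mat3) : msym (msym P) = msym P := msym_eq_self (msym_transpose P)

lemma msym_sub (P Q : Mat3) : msym (P - Q) = msym P - msym Q := by
  unfold msym
  rw [transpose_sub, ← smul_sub]
  congr 1
  abel

lemma mdot_transpose_right (M N : Mat3) : mdot M Nᵀ = mdot Mᵀ N := by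
  unfold mdot
  rw [Finset.sum_comm]
  exact Finset.sum_congr rfl fun i _ => Finset.sum_congr rfl fun j _ => by
    simp [Matrix.transpose_apply]

lemma mdot_msym_right {M : Mat3} (hM : Mᵀ = M) (N : Mat3) : mdot M (msym N) = mdot M N := by
  unfold msym
  rw [mdot_smul_right, mdot_add_right, mdot_transpose_right, hM]
  ring

/-! ### Continuity helpers -/

lemma continuous_entry (i j : Fin 3) : Continuous fun M : Mat3 => M i j :=
  (continuous_apply j).comp (continuous_apply i)

lemma continuous_mdot_self : Continuous fun M : Mat3 => mdot M M := by
  unfold mdot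
  exact continuous_finset_sum _ fun i _ => continuous_finset_sum _ fun j _ =>
    (continuous_entry i j).mul (continuous_entry i j)

lemma continuous_mnorm : Continuous mnorm :=
  Real.continuous_sqrt.comp continuous_mdot_self

lemma continuous_path (B D : Mat3) : Continuous fun t : ℝ => B + t • D :=
  continuous_const.add (continuous_id.smul continuous_const)

lemma mnorm_zero : mnorm (0 : Mat3) = 0 := by simp [mnorm, mdot]

lemma mdot_zero_right (M : Mat3) : mdot M 0 = 0 := by simp [mdot]

lemma mdot_self_pos {E : Mat3} (h : E ≠ 0) : 0 < mdot E E := by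
  have := mnorm_pos h
  nlinarith [mnorm_sq E]

lemma continuous_mdot_pair : Continuous fun X : Mat3 × Mat3 => mdot X.1 X.2 := by
  unfold mdot
  apply continuous_finset_sum
  intro i _
  apply continuous_finset_sum
  intro j _
  exact ((continuous_entry i j).comp continuous_fst).mul
    ((continuous_entry i j).comp continuous_snd)

/-! ### Scalar rpow comparison lemmas -/

lemma rpow_comp2 {x y q : ℝ} (hx : 0 < x) (hy : 0 < y) (h1 : x ≤ 2 * y) (h2 : y ≤ 2 * x) :
    x ^ q ≤ 2 ^ |q| * y ^ q := by
  rcases le_or_gt 0 q with hq | hq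
  · rw [abs_of_nonneg hq]
    calc x ^ q ≤ (2 * y) ^ q := Real.rpow_le_rpow hx.le h1 hq
      _ = 2 ^ q * y ^ q := Real.mul_rpow (by norm_num) hy.le
  · rw [abs_of_neg hq]
    have hy2 : (0:ℝ) < y / 2 := by linarith
    have hxy : y / 2 ≤ x := by linarith
    calc x ^ q ≤ (y / 2) ^ q := Real.rpow_le_rpow_of_nonpos hy2 hxy hq.le
      _ = y ^ q / 2 ^ q := Real.div_rpow hy.le (by norm_num) q
      _ = 2 ^ (-q) * y ^ q := by
          rw [Real.rpow_neg (by norm_num : (0:ℝ) ≤ 2)]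
          field_simp
  
/-- `phi''` is comparable to `(δ+t)^(p-2)`. -/
lemma phi''_bounds {p δ t : ℝ} (hp : 1 < p) (hδ : 0 ≤ δ) (ht : 0 ≤ t) (h : 0 < δ + t) :
    min 1 (p - 1) * (δ + t) ^ (p - 2) ≤ phi'' p δ t ∧
      phi'' p δ t ≤ max 1 (p - 1) * (δ + t) ^ (p - 2) := by
  have key : phi'' p δ t = (δ + t) ^ (p - 2) * (1 + (p - 2) * (t / (δ + t))) := by
    unfold phi''
    have h3 : (δ + t) ^ (p - 3) = (δ + t) ^ (p - 2) / (δ + t) := by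
      rw [← Real.rpow_sub_one h.ne']
      congr 1
      ring
    rw [h3]
    field_simp
    ring
  have hθ1 : 0 ≤ t / (δ + t) := div_nonneg ht h.le
  have hθ2 : t / (δ + t) ≤ 1 := by
    rw [div_le_one h]; linarith
  have hX : (0:ℝ) ≤ (δ + t) ^ (p - 2) := Real.rpow_nonneg h.le _
  have hfac : min 1 (p - 1) ≤ 1 + (p - 2) * (t / (δ + t)) ∧
      1 + (p - 2) * (t / (δ + t)) ≤ max 1 (p - 1) := by
    rcases le_or_gt 2 p with h2 | h2
    · constructor
      · have h4 : 0 ≤ (p - 2) * (t / (δ + t)) := mul_nonneg (by linarith) hθ1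
        have : min 1 (p - 1) ≤ 1 := min_le_left _ _
        linarith
      · have h4 : (p - 2) * (t / (δ + t)) ≤ (p - 2) * 1 :=
          mul_le_mul_of_nonneg_left hθ2 (by linarith)
        have : p - 1 ≤ max 1 (p - 1) := le_max_right _ _
        linarith
    · constructor
      · have h4 : (p - 2) * 1 ≤ (p - 2) * (t / (δ + t)) :=
          mul_le_mul_of_nonpos_left hθ2 (by linarith)
        have : min 1 (p - 1) ≤ p - 1 := min_le_right _ _
        linarith
      · have h4 : (p - 2) * (t / (δ + t)) ≤ 0 := mul_nonpos_of_nonpos_of_nonneg (by linarith) hθ1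
        have : (1:ℝ) ≤ max 1 (p - 1) := le_max_left _ _
        linarith
  constructor
  · rw [key, mul_comm ((δ + t) ^ (p - 2))]
    exact mul_le_mul_of_nonneg_right hfac.1 hX
  · rw [key, mul_comm ((δ + t) ^ (p - 2))]
    exact mul_le_mul_of_nonneg_right hfac.2 hX

/-! ### The segment integral estimate -/

/-- lower constant for the segment integral -/
def cLow (p : ℝ) : ℝ := (1 / 4) * (6:ℝ) ^ (-|p - 2|)

/-- upper constant for the segment integral -/
def cUp (p : ℝ) : ℝ := 1 + (3:ℝ) ^ |p - 2| + (4:ℝ) ^ |p - 2| * (1 + 2 / (p - 1))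

lemma cLow_pos (p : ℝ) : 0 < cLow p := by unfold cLow; positivity

lemma cUp_pos {p : ℝ} (hp : 1 < p) : 0 < cUp p := by
  unfold cUp
  have : 0 < p - 1 := by linarith
  positivity

lemma ae_ne_vol (r : ℝ) : ∀ᵐ t ∂(MeasureTheory.volume : MeasureTheory.Measure ℝ), t ≠ r := by
  have h0 : {t : ℝ | ¬ t ≠ r} = {r} := by ext x; simp [not_not]
  rw [MeasureTheory.ae_iff, h0]
  exact Real.volume_singleton

/-- If `f ≥ m` on a subinterval `[u,v] ⊆ [0,1]` and `f ≥ 0`, then `∫₀¹ f ≥ m(v-u)`. -/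
lemma int_ge_piece {f : ℝ → ℝ} (hfint : IntervalIntegrable f MeasureTheory.volume 0 1)
    (hf0 : ∀ t ∈ Icc (0:ℝ) 1, 0 ≤ f t) {u v m : ℝ} (h0u : 0 ≤ u) (huv : u ≤ v) (hv1 : v ≤ 1)
    (hm : ∀ t ∈ Icc u v, m ≤ f t) : m * (v - u) ≤ ∫ t in (0:ℝ)..1, f t := by
  have hsub : IntervalIntegrable f MeasureTheory.volume u v :=
    hfint.mono_set (by rw [Set.uIcc_of_le (by linarith : (0:ℝ) ≤ 1), Set.uIcc_of_le huv]
                       exact Set.Icc_subset_Icc h0u hv1)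
  have step1 : m * (v - u) ≤ ∫ t in u..v, f t := by
    have := intervalIntegral.integral_mono_on huv intervalIntegrable_const hsub hm
    rwa [intervalIntegral.integral_const, smul_eq_mul, mul_comm] at this
  refine le_trans step1 ?_
  apply intervalIntegral.integral_mono_interval h0u huv hv1 _ hfint
  filter_upwards [MeasureTheory.ae_restrict_mem measurableSet_Ioc] with s hs
  simp only [Pi.zero_apply]
  exact hf0 s ⟨hs.1.le, hs.2⟩

lemma seg_int_lower {p δ : ℝ} (hp : 1 < p) (hδ : 0 ≤ δ) {b d : ℝ} (hb : 0 ≤ b) (hd : 0 < d)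
    {h : ℝ → ℝ} (hc : ContinuousOn h (Icc 0 1)) (hpos : ∀ t ∈ Icc (0:ℝ) 1, 0 < h t)
    (hub : ∀ t ∈ Icc (0:ℝ) 1, h t ≤ b + d) (hlb : ∀ t ∈ Icc (0:ℝ) 1, |b - t * d| ≤ h t) :
    cLow p * (δ + b + d) ^ (p - 2) ≤ ∫ t in (0:ℝ)..1, (δ + h t) ^ (p - 2) := by
  set Y := δ + b + d with hY
  have hYpos : 0 < Y := by simp only [hY]; linarith
  have hYq : (0:ℝ) < Y ^ (p - 2) := Real.rpow_pos_of_pos hYpos _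
  have hfc : ContinuousOn (fun t => (δ + h t) ^ (p - 2)) (Icc 0 1) :=
    (continuousOn_const.add hc).rpow_const fun t ht => Or.inl (ne_of_gt (by show 0 < δ + h t; linarith [hpos t ht]))
  have hfint : IntervalIntegrable (fun t => (δ + h t) ^ (p - 2)) MeasureTheory.volume 0 1 := by
    apply ContinuousOn.intervalIntegrable
    rwa [Set.uIcc_of_le (by norm_num : (0:ℝ) ≤ 1)]
  have hf0 : ∀ t ∈ Icc (0:ℝ) 1, 0 ≤ (δ + h t) ^ (p - 2) := fun t ht =>
    Real.rpow_nonneg (by linarith [hpos t ht]) _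
  rcases le_or_gt 2 p with h2 | h2
  · -- p ≥ 2
    have habs : |p - 2| = p - 2 := abs_of_nonneg (by linarith)
    have hsix : ((Y/6):ℝ) ^ (p - 2) = (6:ℝ) ^ (-(p-2)) * Y ^ (p - 2) := by
      rw [Real.div_rpow hYpos.le (by norm_num : (0:ℝ) ≤ 6),
        Real.rpow_neg (by norm_num : (0:ℝ) ≤ 6)]
      ring
    have key : ((Y/6):ℝ) ^ (p - 2) * (1/4) ≤ ∫ t in (0:ℝ)..1, (δ + h t) ^ (p - 2) := by
      rcases le_or_gt d (2*b) with hbd | hbd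
      · -- use [0, 1/4]
        have := int_ge_piece hfint hf0 (le_refl (0:ℝ)) (by norm_num : (0:ℝ) ≤ 1/4)
          (by norm_num) (m := ((Y/6):ℝ) ^ (p - 2)) ?_
        · simpa using this
        · intro t htJ
          have htI : t ∈ Icc (0:ℝ) 1 := ⟨htJ.1, by linarith [htJ.2]⟩
          have h1 : b - t * d ≤ h t := le_trans (le_abs_self _) (hlb t htI)
          have h2' : t * d ≤ d / 4 :=
            mul_le_mul_of_nonneg_right htJ.2 hd.le |>.trans_eq (by ring)
          have h3 : Y / 6 ≤ δ + h t := by simp only [hY]; nlinarith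
          exact Real.rpow_le_rpow (by positivity) h3 (by linarith)
      · -- use [3/4, 1]
        apply int_ge_piece hfint hf0 (by norm_num : (0:ℝ) ≤ 3/4) (by norm_num) le_rfl
          (m := ((Y/6):ℝ) ^ (p - 2)) ?_ |>.trans_eq' (by ring)
        intro t htJ
        have htI : t ∈ Icc (0:ℝ) 1 := ⟨by linarith [htJ.1], htJ.2⟩
        have h1 : t * d - b ≤ h t := by
          have := hlb t htI
          have := neg_abs_le (b - t * d)
          linarith
        have h2' : 3/4 * d ≤ t * d := mul_le_mul_of_nonneg_right htJ.1 hd.le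
        have h3 : Y / 6 ≤ δ + h t := by simp only [hY]; nlinarith
        exact Real.rpow_le_rpow (by positivity) h3 (by linarith)
    calc cLow p * Y ^ (p - 2) = ((Y/6):ℝ) ^ (p - 2) * (1/4) := by
          unfold cLow; rw [hsix, habs]; ring
      _ ≤ _ := key
  · -- p < 2 : pointwise
    have hcl1 : cLow p ≤ 1 := by
      unfold cLow
      have h1 : (6:ℝ) ^ (-|p - 2|) ≤ 1 :=
        Real.rpow_le_one_of_one_le_of_nonpos (by norm_num) (neg_nonpos.mpr (abs_nonneg _))
      nlinarith [Real.rpow_nonneg (by norm_num : (0:ℝ) ≤ 6) (-|p - 2|)]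
    have key : Y ^ (p - 2) * (1 - 0) ≤ ∫ t in (0:ℝ)..1, (δ + h t) ^ (p - 2) := by
      apply int_ge_piece hfint hf0 le_rfl (by norm_num : (0:ℝ) ≤ 1) le_rfl
      intro t htI
      exact Real.rpow_le_rpow_of_nonpos (by linarith [hpos t htI])
        (by simp only [hY]; linarith [hub t htI]) (by linarith)
    calc cLow p * Y ^ (p - 2) ≤ 1 * Y ^ (p - 2) :=
          mul_le_mul_of_nonneg_right hcl1 hYq.le
      _ = Y ^ (p - 2) * (1 - 0) := by ring
      _ ≤ _ := key

lemma seg_int_upper {p δ : ℝ} (hp : 1 < p) (hδ : 0 ≤ δ) {b d : ℝ} (hb : 0 ≤ b) (hd : 0 < d)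
    {h : ℝ → ℝ} (hc : ContinuousOn h (Icc 0 1)) (hpos : ∀ t ∈ Icc (0:ℝ) 1, 0 < h t)
    (hub : ∀ t ∈ Icc (0:ℝ) 1, h t ≤ b + d) (hlb : ∀ t ∈ Icc (0:ℝ) 1, |b - t * d| ≤ h t) :
    (∫ t in (0:ℝ)..1, (δ + h t) ^ (p - 2)) ≤ cUp p * (δ + b + d) ^ (p - 2) := by
  set Y := δ + b + d with hY
  have hYpos : 0 < Y := by simp only [hY]; linarith
  have hYq : (0:ℝ) < Y ^ (p - 2) := Real.rpow_pos_of_pos hYpos _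
  have hfc : ContinuousOn (fun t => (δ + h t) ^ (p - 2)) (Icc 0 1) :=
    (continuousOn_const.add hc).rpow_const fun t ht => Or.inl (ne_of_gt (by show 0 < δ + h t; linarith [hpos t ht]))
  have hfint : IntervalIntegrable (fun t => (δ + h t) ^ (p - 2)) MeasureTheory.volume 0 1 := by
    apply ContinuousOn.intervalIntegrable
    rwa [Set.uIcc_of_le (by norm_num : (0:ℝ) ≤ 1)]
  have hq3 : (0:ℝ) < (3:ℝ) ^ |p - 2| := Real.rpow_pos_of_pos (by norm_num) _
  have hq4 : (0:ℝ) < (4:ℝ) ^ |p - 2| := Real.rpow_pos_of_pos (by norm_num) _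
  have hp1 : (0:ℝ) < p - 1 := by linarith
  -- a generic "pointwise constant bound" reduction
  have ptwise : ∀ K : ℝ, 0 ≤ K → (∀ t ∈ Icc (0:ℝ) 1, (δ + h t) ^ (p - 2) ≤ K * Y ^ (p - 2)) →
      K ≤ cUp p → (∫ t in (0:ℝ)..1, (δ + h t) ^ (p - 2)) ≤ cUp p * Y ^ (p - 2) := by
    intro K hK hbound hKc
    have step1 : (∫ t in (0:ℝ)..1, (δ + h t) ^ (p - 2)) ≤
        ∫ _t in (0:ℝ)..1, K * Y ^ (p - 2) :=
      intervalIntegral.integral_mono_on (by norm_num) hfint intervalIntegrable_const hbound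
    have step0 : (∫ _t in (0:ℝ)..1, K * Y ^ (p - 2)) = K * Y ^ (p - 2) := by
      rw [intervalIntegral.integral_const, smul_eq_mul]; ring
    rw [step0] at step1
    exact step1.trans (mul_le_mul_of_nonneg_right hKc hYq.le)
  rcases le_or_gt 2 p with h2 | h2
  · -- p ≥ 2 : pointwise `(δ+h t) ≤ Y`
    apply ptwise 1 zero_le_one _ (by
      unfold cUp
      nlinarith [hq3.le, hq4.le, le_of_lt hp1, div_nonneg (by norm_num : (0:ℝ) ≤ 2) hp1.le,
        mul_nonneg hq4.le (div_nonneg (by norm_num : (0:ℝ) ≤ 2) hp1.le)])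
    intro t ht
    rw [one_mul]
    exact Real.rpow_le_rpow (by linarith [hpos t ht]) (by simp only [hY]; linarith [hub t ht])
      (by linarith)
  · have habs : |p - 2| = -(p - 2) := abs_of_neg (by linarith)
    have hqneg : p - 2 < 0 := by linarith
    rcases le_or_gt (2*d) b with hA | hA
    · -- case A : b ≥ 2d, pointwise h t ≥ (b+d)/3
      apply ptwise ((3:ℝ) ^ |p - 2|) hq3.le _ (by
        unfold cUp
        nlinarith [hq3.le, hq4.le, mul_nonneg hq4.le (div_nonneg (by norm_num : (0:ℝ) ≤ 2) hp1.le)])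
      intro t ht
      have h1 : b - t * d ≤ h t := le_trans (le_abs_self _) (hlb t ht)
      have h2' : t * d ≤ d := by nlinarith [ht.1, ht.2]
      have h3 : Y / 3 ≤ δ + h t := by simp only [hY]; nlinarith
      calc (δ + h t) ^ (p - 2) ≤ (Y/3) ^ (p - 2) :=
            Real.rpow_le_rpow_of_nonpos (by positivity) h3 hqneg.le
        _ = (3:ℝ) ^ |p - 2| * Y ^ (p - 2) := by
            rw [habs, Real.div_rpow hYpos.le (by norm_num : (0:ℝ) ≤ 3),
              Real.rpow_neg (by norm_num : (0:ℝ) ≤ 3)]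
            ring
    · rcases le_or_gt d δ with hB | hB
      · -- case B : δ ≥ d, pointwise δ + h t ≥ δ ≥ Y/4
        apply ptwise ((4:ℝ) ^ |p - 2|) hq4.le _ (by
          unfold cUp
          nlinarith [hq3.le, hq4.le, mul_nonneg hq4.le (div_nonneg (by norm_num : (0:ℝ) ≤ 2) hp1.le)])
        intro t ht
        have h3 : Y / 4 ≤ δ + h t := by simp only [hY]; nlinarith [hpos t ht]
        calc (δ + h t) ^ (p - 2) ≤ (Y/4) ^ (p - 2) :=
              Real.rpow_le_rpow_of_nonpos (by positivity) h3 hqneg.le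
          _ = (4:ℝ) ^ |p - 2| * Y ^ (p - 2) := by
              rw [habs, Real.div_rpow hYpos.le (by norm_num : (0:ℝ) ≤ 4),
                Real.rpow_neg (by norm_num : (0:ℝ) ≤ 4)]
              ring
      · -- case C : b < 2d and δ < d
        set r := b / d with hr
        have hr0 : 0 ≤ r := div_nonneg hb hd.le
        have hr2 : r < 2 := by rw [hr, div_lt_iff₀ hd]; linarith
        have hdq : (0:ℝ) < d ^ (p - 2) := Real.rpow_pos_of_pos hd _
        have hdY : d ^ (p - 2) ≤ (4:ℝ) ^ |p - 2| * Y ^ (p - 2) := by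
          have h4 : Y / 4 ≤ d := by simp only [hY]; linarith
          calc d ^ (p - 2) ≤ (Y/4) ^ (p - 2) :=
                Real.rpow_le_rpow_of_nonpos (by positivity) h4 hqneg.le
            _ = (4:ℝ) ^ |p - 2| * Y ^ (p - 2) := by
                rw [habs, Real.div_rpow hYpos.le (by norm_num : (0:ℝ) ≤ 4),
                  Real.rpow_neg (by norm_num : (0:ℝ) ≤ 4)]
                ring
        -- the key integral bound : ∫₀¹ (δ+h t)^(p-2) ≤ d^(p-2) * (2/(p-1))
        have key : (∫ t in (0:ℝ)..1, (δ + h t) ^ (p - 2)) ≤ d ^ (p - 2) * (2/(p-1)) := by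
          have hq1 : (-1:ℝ) < p - 2 := by linarith
          have hq1' : (0:ℝ) ≤ p - 2 + 1 := by linarith
          have hrw : p - 2 + 1 = p - 1 := by ring
          rcases le_or_gt r 1 with hr1 | hr1
          · -- r ≤ 1 : split the integral at r
            have hint1 : IntervalIntegrable (fun t => (δ + h t) ^ (p - 2))
                MeasureTheory.volume 0 r :=
              hfint.mono_set (by
                rw [Set.uIcc_of_le (by norm_num : (0:ℝ) ≤ 1), Set.uIcc_of_le hr0]
                exact Set.Icc_subset_Icc le_rfl hr1)
            have hint2 : IntervalIntegrable (fun t => (δ + h t) ^ (p - 2))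
                MeasureTheory.volume r 1 :=
              hfint.mono_set (by
                rw [Set.uIcc_of_le (by norm_num : (0:ℝ) ≤ 1), Set.uIcc_of_le hr1]
                exact Set.Icc_subset_Icc hr0 le_rfl)
            have hsplit : (∫ t in (0:ℝ)..1, (δ + h t) ^ (p - 2)) =
                (∫ t in (0:ℝ)..r, (δ + h t) ^ (p - 2)) +
                  ∫ t in r..(1:ℝ), (δ + h t) ^ (p - 2) :=
              (intervalIntegral.integral_add_adjacent_intervals hint1 hint2).symm
            -- first piece
            have hgint1 : IntervalIntegrable (fun t => d ^ (p - 2) * (r - t) ^ (p - 2))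
                MeasureTheory.volume 0 r := by
              apply IntervalIntegrable.const_mul
              have := (intervalIntegrable_rpow' (a := 0) (b := r) hq1).comp_sub_left r
              simpa using this.symm
            have piece1 : (∫ t in (0:ℝ)..r, (δ + h t) ^ (p - 2)) ≤
                ∫ t in (0:ℝ)..r, d ^ (p - 2) * (r - t) ^ (p - 2) := by
              apply intervalIntegral.integral_mono_ae_restrict hr0 hint1 hgint1
              filter_upwards [MeasureTheory.ae_restrict_mem measurableSet_Icc,
                MeasureTheory.ae_restrict_of_ae (ae_ne_vol r)] with t htm htr
              have ht01 : t ∈ Icc (0:ℝ) 1 := ⟨htm.1, le_trans htm.2 hr1⟩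
              have htlt : t < r := lt_of_le_of_ne htm.2 htr
              have hpos' : 0 < d * (r - t) := by
                apply mul_pos hd; linarith
              have hbd : d * (r - t) = b - t * d := by
                rw [hr]; field_simp
              have hlow : d * (r - t) ≤ h t := by
                rw [hbd]; exact le_trans (le_abs_self _) (hlb t ht01)
              calc (δ + h t) ^ (p - 2) ≤ (d * (r - t)) ^ (p - 2) :=
                    Real.rpow_le_rpow_of_nonpos hpos' (by linarith [hpos t ht01]) hqneg.le
                _ = d ^ (p - 2) * (r - t) ^ (p - 2) :=
                    Real.mul_rpow hd.le (by linarith)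
            have pc1 : (∫ t in (0:ℝ)..r, d ^ (p - 2) * (r - t) ^ (p - 2)) =
                d ^ (p - 2) * (r ^ (p - 1) / (p - 1)) := by
              rw [intervalIntegral.integral_const_mul]
              congr 1
              rw [intervalIntegral.integral_comp_sub_left (fun u => u ^ (p - 2)) r]
              rw [integral_rpow (Or.inl hq1)]
              rw [sub_self, Real.zero_rpow (by linarith), sub_zero, sub_zero, hrw]
            -- second piece
            have hgint2 : IntervalIntegrable (fun t => d ^ (p - 2) * (t - r) ^ (p - 2))
                MeasureTheory.volume r 1 := by
              apply IntervalIntegrable.const_mul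
              have := (intervalIntegrable_rpow' (a := 0) (b := 1 - r) hq1).comp_sub_right r
              simpa using this
            have piece2 : (∫ t in r..(1:ℝ), (δ + h t) ^ (p - 2)) ≤
                ∫ t in r..(1:ℝ), d ^ (p - 2) * (t - r) ^ (p - 2) := by
              apply intervalIntegral.integral_mono_ae_restrict hr1 hint2 hgint2
              filter_upwards [MeasureTheory.ae_restrict_mem measurableSet_Icc,
                MeasureTheory.ae_restrict_of_ae (ae_ne_vol r)] with t htm htr
              have ht01 : t ∈ Icc (0:ℝ) 1 := ⟨le_trans hr0 htm.1, htm.2⟩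
              have htlt : r < t := lt_of_le_of_ne htm.1 (Ne.symm htr)
              have hpos' : 0 < d * (t - r) := by
                apply mul_pos hd; linarith
              have hbd : d * (t - r) = t * d - b := by
                rw [hr]; field_simp
              have hlow : d * (t - r) ≤ h t := by
                rw [hbd]
                have := hlb t ht01
                have := neg_abs_le (b - t * d)
                linarith
              calc (δ + h t) ^ (p - 2) ≤ (d * (t - r)) ^ (p - 2) :=
                    Real.rpow_le_rpow_of_nonpos hpos' (by linarith [hpos t ht01]) hqneg.le
                _ = d ^ (p - 2) * (t - r) ^ (p - 2) :=
                    Real.mul_rpow hd.le (by linarith)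
            have pc2 : (∫ t in r..(1:ℝ), d ^ (p - 2) * (t - r) ^ (p - 2)) =
                d ^ (p - 2) * ((1 - r) ^ (p - 1) / (p - 1)) := by
              rw [intervalIntegral.integral_const_mul]
              congr 1
              rw [intervalIntegral.integral_comp_sub_right (fun u => u ^ (p - 2)) r]
              rw [integral_rpow (Or.inl hq1)]
              rw [sub_self, Real.zero_rpow (by linarith), sub_zero, hrw]
            have hb1 : r ^ (p - 1) ≤ 1 := Real.rpow_le_one hr0 hr1 (by linarith)
            have hb2 : (1 - r) ^ (p - 1) ≤ 1 :=
              Real.rpow_le_one (by linarith) (by linarith) (by linarith)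
            rw [hsplit]
            calc (∫ t in (0:ℝ)..r, (δ + h t) ^ (p - 2)) +
                  ∫ t in r..(1:ℝ), (δ + h t) ^ (p - 2)
                ≤ d ^ (p - 2) * (r ^ (p - 1) / (p - 1)) +
                  d ^ (p - 2) * ((1 - r) ^ (p - 1) / (p - 1)) := by
                  have := piece1.trans_eq pc1
                  have := piece2.trans_eq pc2
                  linarith
              _ ≤ d ^ (p - 2) * (2/(p-1)) := by
                  rw [← mul_add]
                  apply mul_le_mul_of_nonneg_left _ hdq.le
                  rw [← add_div, div_le_div_iff₀ hp1 hp1]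
                  nlinarith
          · -- 1 < r : no singularity in [0,1]
            have hbound : ∀ t ∈ Icc (0:ℝ) 1,
                (δ + h t) ^ (p - 2) ≤ d ^ (p - 2) * (r - t) ^ (p - 2) := by
              intro t ht
              have htlt : t < r := lt_of_le_of_lt ht.2 hr1
              have hpos' : 0 < d * (r - t) := by
                apply mul_pos hd; linarith
              have hbd : d * (r - t) = b - t * d := by
                rw [hr]; field_simp
              have hlow : d * (r - t) ≤ h t := by
                rw [hbd]; exact le_trans (le_abs_self _) (hlb t ht)
              calc (δ + h t) ^ (p - 2) ≤ (d * (r - t)) ^ (p - 2) :=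
                    Real.rpow_le_rpow_of_nonpos hpos' (by linarith [hpos t ht]) hqneg.le
                _ = d ^ (p - 2) * (r - t) ^ (p - 2) :=
                    Real.mul_rpow hd.le (by linarith)
            have hgint : IntervalIntegrable (fun t => d ^ (p - 2) * (r - t) ^ (p - 2))
                MeasureTheory.volume 0 1 := by
              apply IntervalIntegrable.const_mul
              have := (intervalIntegrable_rpow' (a := r - 1) (b := r) hq1).comp_sub_left r
              simpa using this.symm
            have step1 := intervalIntegral.integral_mono_on (by norm_num : (0:ℝ) ≤ 1)
              hfint hgint hbound
            have pc : (∫ t in (0:ℝ)..1, d ^ (p - 2) * (r - t) ^ (p - 2)) =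
                d ^ (p - 2) * ((r ^ (p - 1) - (r - 1) ^ (p - 1)) / (p - 1)) := by
              rw [intervalIntegral.integral_const_mul]
              congr 1
              rw [intervalIntegral.integral_comp_sub_left (fun u => u ^ (p - 2)) r]
              rw [integral_rpow (Or.inl hq1)]
              rw [sub_zero, hrw]
            have hb1 : r ^ (p - 1) ≤ 2 := by
              calc r ^ (p - 1) ≤ (2:ℝ) ^ (p - 1) :=
                    Real.rpow_le_rpow hr0 hr2.le (by linarith)
                _ ≤ (2:ℝ) ^ (1:ℝ) :=
                    Real.rpow_le_rpow_of_exponent_le (by norm_num) (by linarith)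
                _ = 2 := Real.rpow_one 2
            have hb2 : (0:ℝ) ≤ (r - 1) ^ (p - 1) := Real.rpow_nonneg (by linarith) _
            calc (∫ t in (0:ℝ)..1, (δ + h t) ^ (p - 2))
                ≤ d ^ (p - 2) * ((r ^ (p - 1) - (r - 1) ^ (p - 1)) / (p - 1)) :=
                  step1.trans_eq pc
              _ ≤ d ^ (p - 2) * (2/(p-1)) := by
                  apply mul_le_mul_of_nonneg_left _ hdq.le
                  rw [div_le_div_iff₀ hp1 hp1]
                  nlinarith
        calc (∫ t in (0:ℝ)..1, (δ + h t) ^ (p - 2)) ≤ d ^ (p - 2) * (2/(p-1)) := key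
          _ ≤ (4:ℝ) ^ |p - 2| * Y ^ (p - 2) * (2/(p-1)) :=
              mul_le_mul_of_nonneg_right hdY (div_nonneg (by norm_num) hp1.le)
          _ = ((4:ℝ) ^ |p - 2| * (2/(p-1))) * Y ^ (p - 2) := by ring
          _ ≤ cUp p * Y ^ (p - 2) := by
              apply mul_le_mul_of_nonneg_right _ hYq.le
              have e : cUp p = 1 + (3:ℝ) ^ |p - 2| + (4:ℝ) ^ |p - 2| +
                  (4:ℝ) ^ |p - 2| * (2/(p-1)) := by unfold cUp; ring
              rw [e]
              linarith [hq3.le, hq4.le]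

/-! ### Bounds for `phiShift` -/

/-- lower constant for `phiShift` comparison -/
def cPhiLow (p : ℝ) : ℝ := min ((1 / 4) * (2:ℝ) ^ (-|p - 2|)) (1 / p)

/-- upper constant for `phiShift` comparison -/
def cPhiUp (p : ℝ) : ℝ := 2 + (2:ℝ) ^ |p - 2|

lemma cPhiLow_pos {p : ℝ} (hp : 1 < p) : 0 < cPhiLow p := by
  unfold cPhiLow
  have : 0 < p := by linarith
  positivity

lemma cPhiUp_pos (p : ℝ) : 0 < cPhiUp p := by unfold cPhiUp; positivity

lemma phiShift_eq {p δ a t : ℝ} (ha : 0 ≤ a) (ht : 0 ≤ t) :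
    phiShift p δ a t = ∫ s in (0:ℝ)..t, (δ + a + s) ^ (p - 2) * s := by
  unfold phiShift phi'
  apply intervalIntegral.integral_congr_ae
  filter_upwards with s hs
  rw [Set.uIoc_of_le ht] at hs
  have hs0 : 0 < s := hs.1
  have h0 : a + s ≠ 0 := ne_of_gt (by linarith)
  rw [add_assoc]
  field_simp

lemma cPhiLow_le_quarter_two {p : ℝ} : cPhiLow p ≤ (1 / 4) * (2:ℝ) ^ (-|p - 2|) :=
  min_le_left _ _

lemma cPhiLow_le_half {p : ℝ} : cPhiLow p ≤ 1 / 2 := by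
  refine le_trans cPhiLow_le_quarter_two ?_
  have h1 : (2:ℝ) ^ (-|p - 2|) ≤ 1 :=
    Real.rpow_le_one_of_one_le_of_nonpos (by norm_num) (neg_nonpos.mpr (abs_nonneg _))
  nlinarith [Real.rpow_nonneg (by norm_num : (0:ℝ) ≤ 2) (-|p - 2|)]

lemma phiShift_bounds {p δ : ℝ} (hp : 1 < p) (hδ : 0 ≤ δ) {a t : ℝ} (ha : 0 ≤ a) (ht : 0 ≤ t) :
    cPhiLow p * ((δ + a + t) ^ (p - 2) * t ^ 2) ≤ phiShift p δ a t ∧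
      phiShift p δ a t ≤ cPhiUp p * ((δ + a + t) ^ (p - 2) * t ^ 2) := by
  rcases eq_or_lt_of_le ht with ht0 | ht0
  · rw [← ht0]
    unfold phiShift
    simp
  rw [phiShift_eq ha ht]
  set X := δ + a + t with hX
  have hXpos : 0 < X := by simp only [hX]; linarith
  have hXq : (0:ℝ) < X ^ (p - 2) := Real.rpow_pos_of_pos hXpos _
  rcases eq_or_lt_of_le (by linarith : (0:ℝ) ≤ δ + a) with hda | hda
  · -- δ + a = 0 : exact computation
    have hae : ∀ᵐ s ∂(MeasureTheory.volume), s ∈ Set.uIoc (0:ℝ) t →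
        (δ + a + s) ^ (p - 2) * s = s ^ (p - 1) := by
      filter_upwards with s hmem
      rw [Set.uIoc_of_le ht] at hmem
      have hs0 : 0 < s := hmem.1
      rw [← hda]
      rw [zero_add, ← Real.rpow_add_one (ne_of_gt hs0)]
      congr 1
      ring
    rw [intervalIntegral.integral_congr_ae hae]
    rw [integral_rpow (Or.inl (by linarith : (-1:ℝ) < p - 1))]
    have h0p : (0:ℝ) ^ (p - 1 + 1) = 0 := Real.zero_rpow (by linarith)
    rw [h0p, sub_zero]
    have hXt : X = t := by rw [hX, ← hda]; ring
    have hXqt : X ^ (p - 2) * t ^ 2 = t ^ (p - 1 + 1) := by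
      rw [hXt]
      rw [show (t:ℝ) ^ (2:ℕ) = t ^ ((2:ℕ):ℝ) from (Real.rpow_natCast t 2).symm]
      rw [← Real.rpow_add ht0]
      norm_num
    rw [hXqt]
    have htp : 0 < t ^ (p - 1 + 1) := Real.rpow_pos_of_pos ht0 _
    constructor
    · have h1 : cPhiLow p ≤ 1 / p := min_le_right _ _
      calc cPhiLow p * t ^ (p - 1 + 1) ≤ (1 / p) * t ^ (p - 1 + 1) :=
            mul_le_mul_of_nonneg_right h1 htp.le
        _ = t ^ (p - 1 + 1) / (p - 1 + 1) := by rw [show p - 1 + 1 = p by ring]; ring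
    · have h2 : (1:ℝ) / p ≤ cPhiUp p := by
        unfold cPhiUp
        have : (1:ℝ) / p ≤ 1 := by
          rw [div_le_one (by linarith)]; linarith
        nlinarith [Real.rpow_nonneg (by norm_num : (0:ℝ) ≤ 2) |p - 2|]
      calc t ^ (p - 1 + 1) / (p - 1 + 1) = (1 / p) * t ^ (p - 1 + 1) := by
            rw [show p - 1 + 1 = p by ring]; ring
        _ ≤ cPhiUp p * t ^ (p - 1 + 1) := mul_le_mul_of_nonneg_right h2 htp.le
  · -- δ + a > 0 : the integrand is continuous
    have hbase : ∀ s ∈ Set.Icc (0:ℝ) t, 0 < δ + a + s := fun s hs => by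
      have := hs.1; linarith
    have hcont : ContinuousOn (fun s : ℝ => (δ + a + s) ^ (p - 2) * s) (Set.Icc 0 t) := by
      apply ContinuousOn.mul
      · exact (continuousOn_const.add continuousOn_id).rpow_const
          fun s hs => Or.inl (ne_of_gt (hbase s hs))
      · exact continuousOn_id
    have hint : IntervalIntegrable (fun s : ℝ => (δ + a + s) ^ (p - 2) * s)
        MeasureTheory.volume 0 t := by
      apply ContinuousOn.intervalIntegrable
      rwa [Set.uIcc_of_le ht]
    constructor
    · -- lower bounds
      rcases le_or_gt 2 p with h2 | h2
      · -- p ≥ 2 : restrict to [t/2, t]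
        have hint2 : IntervalIntegrable (fun s : ℝ => (δ + a + s) ^ (p - 2) * s)
            MeasureTheory.volume (t/2) t :=
          hint.mono_set (by rw [Set.uIcc_of_le ht, Set.uIcc_of_le (by linarith : t/2 ≤ t)]
                            exact Set.Icc_subset_Icc (by linarith) le_rfl)
        have hm : ∀ s ∈ Set.Icc (t/2) t,
            (X/2) ^ (p - 2) * (t/2) ≤ (δ + a + s) ^ (p - 2) * s := by
          intro s hs
          have h1 : X / 2 ≤ δ + a + s := by
            have := hs.1; simp only [hX]; linarith
          apply mul_le_mul
          · exact Real.rpow_le_rpow (by linarith) h1 (by linarith)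
          · exact hs.1
          · linarith
          · exact Real.rpow_nonneg (by linarith) _
        have step1 : (X/2) ^ (p - 2) * (t/2) * (t - t/2) ≤
            ∫ s in (t/2)..t, (δ + a + s) ^ (p - 2) * s := by
          have := intervalIntegral.integral_mono_on (by linarith : t/2 ≤ t)
            (intervalIntegrable_const) hint2 hm
          rwa [intervalIntegral.integral_const, smul_eq_mul, mul_comm] at this
        have step2 : (∫ s in (t/2)..t, (δ + a + s) ^ (p - 2) * s) ≤
            ∫ s in (0:ℝ)..t, (δ + a + s) ^ (p - 2) * s := by
          apply intervalIntegral.integral_mono_interval (by linarith : (0:ℝ) ≤ t/2)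
            (by linarith : t/2 ≤ t) le_rfl _ hint
          filter_upwards [MeasureTheory.ae_restrict_mem measurableSet_Ioc] with s hs
          have hs1 := hs.1
          simp only [Pi.zero_apply]
          exact mul_nonneg (Real.rpow_nonneg (by linarith : (0:ℝ) ≤ δ + a + s) _) (by linarith)
        have hhalf : (X/2) ^ (p - 2) = (2:ℝ) ^ (-(p-2)) * X ^ (p - 2) := by
          rw [Real.div_rpow hXpos.le (by norm_num), Real.rpow_neg (by norm_num)]
          ring
        have habs : |p - 2| = p - 2 := abs_of_nonneg (by linarith)
        calc cPhiLow p * (X ^ (p - 2) * t ^ 2)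
            ≤ (1/4) * (2:ℝ) ^ (-|p-2|) * (X ^ (p - 2) * t ^ 2) :=
              mul_le_mul_of_nonneg_right cPhiLow_le_quarter_two (by positivity)
          _ = (X/2) ^ (p - 2) * (t/2) * (t - t/2) := by
              rw [hhalf, habs]; ring
          _ ≤ ∫ s in (t/2)..t, (δ + a + s) ^ (p - 2) * s := step1
          _ ≤ _ := step2
      · -- p < 2 : pointwise lower bound
        have hm : ∀ s ∈ Set.Icc (0:ℝ) t, X ^ (p - 2) * s ≤ (δ + a + s) ^ (p - 2) * s := by
          intro s hs
          apply mul_le_mul_of_nonneg_right _ hs.1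
          exact Real.rpow_le_rpow_of_nonpos (hbase s hs)
            (by simp only [hX]; linarith [hs.2]) (by linarith)
        have step1 : (∫ s in (0:ℝ)..t, X ^ (p - 2) * s) ≤
            ∫ s in (0:ℝ)..t, (δ + a + s) ^ (p - 2) * s :=
          intervalIntegral.integral_mono_on ht
            (by apply Continuous.intervalIntegrable; exact continuous_const.mul continuous_id)
            hint hm
        have step0 : (∫ s in (0:ℝ)..t, X ^ (p - 2) * s) = X ^ (p - 2) * (t^2/2) := by
          rw [intervalIntegral.integral_const_mul, integral_id]
          norm_num
        calc cPhiLow p * (X ^ (p - 2) * t ^ 2)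
            ≤ (1/2) * (X ^ (p - 2) * t ^ 2) :=
              mul_le_mul_of_nonneg_right cPhiLow_le_half (by positivity)
          _ = X ^ (p - 2) * (t^2/2) := by ring
          _ ≤ _ := step0 ▸ step1
    · -- upper bounds
      have hup2 : (2:ℝ) ^ |p - 2| ≤ cPhiUp p := by
        unfold cPhiUp; linarith
      have hup1 : (1:ℝ) ≤ cPhiUp p := by
        unfold cPhiUp
        nlinarith [Real.rpow_nonneg (by norm_num : (0:ℝ) ≤ 2) |p - 2|]
      rcases le_or_gt 2 p with h2 | h2
      · -- p ≥ 2 : pointwise upper bound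
        have hm : ∀ s ∈ Set.Icc (0:ℝ) t, (δ + a + s) ^ (p - 2) * s ≤ X ^ (p - 2) * s := by
          intro s hs
          apply mul_le_mul_of_nonneg_right _ hs.1
          exact Real.rpow_le_rpow (by linarith [hs.1] : (0:ℝ) ≤ δ + a + s)
            (by simp only [hX]; linarith [hs.2]) (by linarith)
        have step1 : (∫ s in (0:ℝ)..t, (δ + a + s) ^ (p - 2) * s) ≤
            ∫ s in (0:ℝ)..t, X ^ (p - 2) * s :=
          intervalIntegral.integral_mono_on ht hint
            (by apply Continuous.intervalIntegrable; exact continuous_const.mul continuous_id) hm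
        have step0 : (∫ s in (0:ℝ)..t, X ^ (p - 2) * s) = X ^ (p - 2) * (t^2/2) := by
          rw [intervalIntegral.integral_const_mul, integral_id]
          norm_num
        calc (∫ s in (0:ℝ)..t, (δ + a + s) ^ (p - 2) * s)
            ≤ X ^ (p - 2) * (t^2/2) := step0 ▸ step1
          _ ≤ cPhiUp p * (X ^ (p - 2) * t ^ 2) := by
              have hpos : (0:ℝ) ≤ X ^ (p - 2) * t ^ 2 := by positivity
              nlinarith [mul_le_mul_of_nonneg_right hup1 hpos]
      · -- p < 2
        rcases le_or_gt t (δ + a) with hcase | hcase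
        · -- t ≤ δ + a
          have hm : ∀ s ∈ Set.Icc (0:ℝ) t,
              (δ + a + s) ^ (p - 2) * s ≤ (2:ℝ)^|p-2| * X ^ (p - 2) * s := by
            intro s hs
            apply mul_le_mul_of_nonneg_right _ hs.1
            have h1 : X / 2 ≤ δ + a + s := by
              simp only [hX]; have := hs.1; linarith
            calc (δ + a + s) ^ (p - 2) ≤ (X/2) ^ (p - 2) :=
                  Real.rpow_le_rpow_of_nonpos (by linarith) h1 (by linarith)
              _ = (2:ℝ)^|p-2| * X ^ (p - 2) := by
                  rw [abs_of_neg (by linarith : p - 2 < 0)]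
                  rw [Real.div_rpow hXpos.le (by norm_num : (0:ℝ) ≤ 2)]
                  rw [show -(p-2) = -(p-2) from rfl, Real.rpow_neg (by norm_num : (0:ℝ) ≤ 2)]
                  ring
          have step1 : (∫ s in (0:ℝ)..t, (δ + a + s) ^ (p - 2) * s) ≤
              ∫ s in (0:ℝ)..t, (2:ℝ)^|p-2| * X ^ (p - 2) * s :=
            intervalIntegral.integral_mono_on ht hint
              (by apply Continuous.intervalIntegrable; exact continuous_const.mul continuous_id) hm
          have step0 : (∫ s in (0:ℝ)..t, (2:ℝ)^|p-2| * X ^ (p - 2) * s) =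
              (2:ℝ)^|p-2| * X ^ (p - 2) * (t^2/2) := by
            rw [intervalIntegral.integral_const_mul, integral_id]
            norm_num
          have h2q : (0:ℝ) < (2:ℝ)^|p-2| := Real.rpow_pos_of_pos (by norm_num) _
          calc (∫ s in (0:ℝ)..t, (δ + a + s) ^ (p - 2) * s)
              ≤ (2:ℝ)^|p-2| * X ^ (p - 2) * (t^2/2) := step0 ▸ step1
            _ ≤ cPhiUp p * (X ^ (p - 2) * t ^ 2) := by
                have hpos : (0:ℝ) ≤ X ^ (p - 2) * t ^ 2 := by positivity
                nlinarith [mul_le_mul_of_nonneg_right hup2 hpos, mul_nonneg h2q.le hpos]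
        · -- δ + a < t
          have hm : ∀ s ∈ Set.Icc (0:ℝ) t,
              (δ + a + s) ^ (p - 2) * s ≤ X ^ (p - 2) * (2*t) := by
            intro s hs
            have hbs : 0 < δ + a + s := hbase s hs
            calc (δ + a + s) ^ (p - 2) * s ≤ (δ + a + s) ^ (p - 2) * (δ + a + s) :=
                  mul_le_mul_of_nonneg_left (by linarith [hs.1])
                    (Real.rpow_nonneg hbs.le _)
              _ = (δ + a + s) ^ (p - 2 + 1) := (Real.rpow_add_one hbs.ne' _).symm
              _ ≤ X ^ (p - 2 + 1) := Real.rpow_le_rpow hbs.le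
                  (by simp only [hX]; linarith [hs.2]) (by linarith)
              _ = X ^ (p - 2) * X := Real.rpow_add_one hXpos.ne' _
              _ ≤ X ^ (p - 2) * (2*t) := mul_le_mul_of_nonneg_left
                  (by simp only [hX]; linarith) hXq.le
          have step1 : (∫ s in (0:ℝ)..t, (δ + a + s) ^ (p - 2) * s) ≤
              ∫ s in (0:ℝ)..t, X ^ (p - 2) * (2*t) :=
            intervalIntegral.integral_mono_on ht hint intervalIntegrable_const hm
          have step0 : (∫ s in (0:ℝ)..t, X ^ (p - 2) * (2*t)) = X ^ (p - 2) * (2*t) * t := by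
            rw [intervalIntegral.integral_const, smul_eq_mul]
            ring
          calc (∫ s in (0:ℝ)..t, (δ + a + s) ^ (p - 2) * s)
              ≤ X ^ (p - 2) * (2*t) * t := step0 ▸ step1
            _ = 2 * (X ^ (p - 2) * t ^ 2) := by ring
            _ ≤ cPhiUp p * (X ^ (p - 2) * t ^ 2) := by
                apply mul_le_mul_of_nonneg_right _ (by positivity)
                unfold cPhiUp
                nlinarith [Real.rpow_nonneg (by norm_num : (0:ℝ) ≤ 2) |p - 2|]

/-! ### The core estimate along the segment -/

section Core

variable {p δ κ₀ κ₁ : ℝ} {S : Mat3 → Mat3}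

/-- core lower constant -/
def cCore (p κ₀ : ℝ) : ℝ := κ₀ * min 1 (p - 1) * cLow p * (2:ℝ) ^ (-|p - 2|)

/-- core upper constant -/
def CCore (p κ₁ : ℝ) : ℝ := 9 * κ₁ * max 1 (p - 1) * cUp p * (2:ℝ) ^ |p - 2|

lemma cCore_pos {p κ₀ : ℝ} (hp : 1 < p) (hκ₀ : 0 < κ₀) : 0 < cCore p κ₀ := by
  unfold cCore
  have h1 : 0 < min 1 (p - 1) := lt_min one_pos (by linarith)
  have := cLow_pos p
  positivity

lemma CCore_pos {p κ₁ : ℝ} (hp : 1 < p) (hκ₁ : 0 < κ₁) : 0 < CCore p κ₁ := by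
  unfold CCore
  have h1 : 0 < max 1 (p - 1) := lt_of_lt_of_le one_pos (le_max_left _ _)
  have := cUp_pos hp
  positivity

/-- The directional derivative as a sum of partial derivatives. -/
lemma fderiv_mdot_eq (S : Mat3 → Mat3) (X D : Mat3) :
    mdot (fderiv ℝ S X D) D = ∑ i, ∑ j, ∑ k, ∑ l, DS S X k l i j * D i j * D k l := by
  have hD : (fderiv ℝ S X) D = ∑ k, ∑ l, D k l • (fderiv ℝ S X) (Matrix.single k l 1) := by
    conv_lhs => rw [matrix_eq_sum_single D]
    rw [map_sum]
    refine Finset.sum_congr rfl fun k _ => ?_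
    rw [map_sum]
    refine Finset.sum_congr rfl fun l _ => ?_
    rw [show Matrix.single k l (D k l) = D k l • Matrix.single k l 1 by
      rw [smul_single, smul_eq_mul, mul_one]]
    exact (fderiv ℝ S X).map_smul _ _
  have hentry : ∀ i j, (fderiv ℝ S X D) i j = ∑ k, ∑ l, D k l * DS S X k l i j := by
    intro i j
    rw [hD]
    rw [Matrix.sum_apply]
    refine Finset.sum_congr rfl fun k _ => ?_
    rw [Matrix.sum_apply]
    refine Finset.sum_congr rfl fun l _ => ?_
    simp [DS, Matrix.smul_apply, smul_eq_mul]
  unfold mdot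
  refine Finset.sum_congr rfl fun i _ => Finset.sum_congr rfl fun j _ => ?_
  rw [hentry i j, Finset.sum_mul]
  refine Finset.sum_congr rfl fun k _ => ?_
  rw [Finset.sum_mul]
  refine Finset.sum_congr rfl fun l _ => ?_
  ring

/-- The integrand identity and bounds. -/
lemma integrand_bounds (hp : 1 < p) (hδ : 0 ≤ δ) (pd : PDelta p δ κ₀ κ₁ S)
    {X : Mat3} (hX : Xᵀ = X) (hX0 : X ≠ 0) {D : Mat3} (hD : Dᵀ = D) :
    κ₀ * phi'' p δ (mnorm X) * mnorm D ^ 2 ≤ mdot (fderiv ℝ S X D) D ∧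
      mdot (fderiv ℝ S X D) D ≤ 9 * κ₁ * phi'' p δ (mnorm X) * mnorm D ^ 2 := by
  have hmsX : msym X = X := msym_eq_self hX
  have hmsD : msym D = D := msym_eq_self hD
  have hX0' : msym X ≠ 0 := by rw [hmsX]; exact hX0
  have hXpos : 0 < mnorm X := mnorm_pos hX0
  have hphi : 0 ≤ phi'' p δ (mnorm X) := by
    have hb := (phi''_bounds hp hδ hXpos.le (by linarith)).1
    have h1 : 0 < min 1 (p - 1) := lt_min one_pos (by linarith)
    nlinarith [Real.rpow_nonneg (by linarith : (0:ℝ) ≤ δ + mnorm X) (p - 2)]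
  constructor
  · have := pd.lower X D hX0'
    rw [hmsX, hmsD] at this
    rw [fderiv_mdot_eq]
    exact this
  · rw [fderiv_mdot_eq]
    set c := κ₁ * phi'' p δ (mnorm X) with hc
    have hc0 : 0 ≤ c := by
      have h1 := pd.upper X hX0' 0 0 0 0
      rw [hmsX] at h1
      exact le_trans (abs_nonneg _) h1
    have habs : ∀ i j k l : Fin 3, DS S X k l i j * D i j * D k l ≤ c * |D i j| * |D k l| := by
      intro i j k l
      have h1 := pd.upper X hX0' i j k l
      rw [hmsX] at h1
      calc DS S X k l i j * D i j * D k l ≤ |DS S X k l i j * D i j * D k l| := le_abs_self _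
        _ = |DS S X k l i j| * |D i j| * |D k l| := by rw [abs_mul, abs_mul]
        _ ≤ c * |D i j| * |D k l| := by
            apply mul_le_mul_of_nonneg_right _ (abs_nonneg _)
            exact mul_le_mul_of_nonneg_right h1 (abs_nonneg _)
    have hsum : (∑ i, ∑ j, ∑ k, ∑ l, DS S X k l i j * D i j * D k l) ≤
        ∑ i, ∑ j, ∑ k, ∑ l, c * |D i j| * |D k l| := by
      refine Finset.sum_le_sum fun i _ => Finset.sum_le_sum fun j _ =>
        Finset.sum_le_sum fun k _ => Finset.sum_le_sum fun l _ => habs i j k l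
    have hfact : (∑ i, ∑ j, ∑ k, ∑ l, c * |D i j| * |D k l|) =
        c * (∑ i, ∑ j, |D i j|) ^ 2 := by
      have inner : ∀ i j : Fin 3, (∑ k, ∑ l, c * |D i j| * |D k l|) =
          c * |D i j| * (∑ k, ∑ l, |D k l|) := by
        intro i j
        rw [Finset.mul_sum]
        exact Finset.sum_congr rfl fun k _ => by rw [Finset.mul_sum]
      calc (∑ i, ∑ j, ∑ k, ∑ l, c * |D i j| * |D k l|)
          = ∑ i, ∑ j, c * |D i j| * (∑ k, ∑ l, |D k l|) :=
            Finset.sum_congr rfl fun i _ => Finset.sum_congr rfl fun j _ => inner i j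
        _ = (∑ i, ∑ j, |D i j|) * (c * (∑ k, ∑ l, |D k l|)) := by
            rw [Finset.sum_mul]
            refine Finset.sum_congr rfl fun i _ => ?_
            rw [Finset.sum_mul]
            exact Finset.sum_congr rfl fun j _ => by ring
        _ = c * (∑ i, ∑ j, |D i j|) ^ 2 := by rw [sq]; ring
    calc (∑ i, ∑ j, ∑ k, ∑ l, DS S X k l i j * D i j * D k l)
        ≤ c * (∑ i, ∑ j, |D i j|) ^ 2 := hsum.trans_eq hfact
      _ ≤ c * (9 * mnorm D ^ 2) := mul_le_mul_of_nonneg_left (sum_abs_sq_le D) hc0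
      _ = 9 * κ₁ * phi'' p δ (mnorm X) * mnorm D ^ 2 := by rw [hc]; ring

/-- Fundamental theorem of calculus along a segment avoiding `0`. -/
lemma ftc_seg (pd : PDelta p δ κ₀ κ₁ S) (A B : Mat3)
    (hseg : ∀ t ∈ Icc (0:ℝ) 1, B + t • (A - B) ≠ 0) :
    mdot (S A - S B) (A - B) =
      ∫ t in (0:ℝ)..1, mdot (fderiv ℝ S (B + t • (A - B)) (A - B)) (A - B) := by
  set D := A - B with hDdef
  have hdiff : ∀ X : Mat3, X ≠ 0 → DifferentiableAt ℝ S X := fun X hX =>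
    (pd.smooth.differentiableOn one_ne_zero).differentiableAt (isOpen_compl_singleton.mem_nhds hX)
  have hderiv : ∀ t ∈ Set.uIcc (0:ℝ) 1,
      HasDerivAt (fun s => mdot (S (B + s • D)) D)
        (mdot (fderiv ℝ S (B + t • D) D) D) t := by
    intro t ht
    rw [Set.uIcc_of_le (by norm_num : (0:ℝ) ≤ 1)] at ht
    have hpath : HasDerivAt (fun s : ℝ => B + s • D) D t := by
      have h1 : HasDerivAt (fun s : ℝ => s • D) ((1:ℝ) • D) t := (hasDerivAt_id t).smul_const D
      have h2 := h1.const_add B; rw [one_smul] at h2; exact h2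
    have hSd : HasDerivAt (fun s => S (B + s • D)) (fderiv ℝ S (B + t • D) D) t :=
      ((hdiff _ (hseg t ht)).hasFDerivAt).comp_hasDerivAt t hpath
    have hcoord : ∀ i j : Fin 3, HasDerivAt (fun s => S (B + s • D) i j)
        ((fderiv ℝ S (B + t • D) D) i j) t := by
      intro i j
      exact hasDerivAt_pi.mp (hasDerivAt_pi.mp hSd i) j
    have hsum : HasDerivAt (fun s => ∑ i, ∑ j, S (B + s • D) i j * D i j)
        (∑ i, ∑ j, (fderiv ℝ S (B + t • D) D) i j * D i j) t := by
      apply HasDerivAt.fun_sum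
      intro i _
      apply HasDerivAt.fun_sum
      intro j _
      exact (hcoord i j).mul_const (D i j)
    exact hsum
  have hfc : ContinuousOn (fderiv ℝ S) {(0:Mat3)}ᶜ :=
    pd.smooth.continuousOn_fderiv_of_isOpen isOpen_compl_singleton le_rfl
  have hpathc : Continuous (fun t : ℝ => B + t • D) := continuous_path B D
  have h1 : ContinuousOn (fun t : ℝ => fderiv ℝ S (B + t • D)) (Icc (0:ℝ) 1) :=
    hfc.comp hpathc.continuousOn fun t ht => hseg t ht
  have h2 : Continuous (fun L : Mat3 →L[ℝ] Mat3 => mdot (L D) D) := by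
    unfold mdot
    apply continuous_finset_sum
    intro i _
    apply continuous_finset_sum
    intro j _
    exact ((continuous_entry i j).comp (continuous_id.clm_apply continuous_const)).mul
      continuous_const
  have hGc : ContinuousOn (fun t : ℝ => mdot (fderiv ℝ S (B + t • D) D) D) (Icc (0:ℝ) 1) :=
    h2.comp_continuousOn h1
  have hGint : IntervalIntegrable (fun t => mdot (fderiv ℝ S (B + t • D) D) D)
      MeasureTheory.volume 0 1 := by
    apply ContinuousOn.intervalIntegrable
    rwa [Set.uIcc_of_le (by norm_num : (0:ℝ) ≤ 1)]
  have key := intervalIntegral.integral_eq_sub_of_hasDerivAt hderiv hGint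
  rw [key]
  have e1 : B + (1:ℝ) • D = A := by rw [one_smul, hDdef]; abel
  have e0 : B + (0:ℝ) • D = B := by rw [zero_smul, add_zero]
  rw [e1, e0, mdot_sub_left]

/-- Core estimate, good case: segment from `B` to `A` avoids `0`. -/
lemma coreGood (hp : 1 < p) (hδ : 0 ≤ δ) (hκ₀ : 0 < κ₀) (hκ₁ : 0 < κ₁)
    (pd : PDelta p δ κ₀ κ₁ S) {A B : Mat3} (hA : Aᵀ = A) (hB : Bᵀ = B)
    (hseg : ∀ t ∈ Icc (0:ℝ) 1, B + t • (A - B) ≠ 0) (hAB : A ≠ B) :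
    cCore p κ₀ * ((δ + mnorm A + mnorm (A - B)) ^ (p - 2) * mnorm (A - B) ^ 2) ≤
        mdot (S A - S B) (A - B) ∧
      mdot (S A - S B) (A - B) ≤
        CCore p κ₁ * ((δ + mnorm A + mnorm (A - B)) ^ (p - 2) * mnorm (A - B) ^ 2) := by
  have hDsym : (A - B)ᵀ = A - B := by rw [transpose_sub, hA, hB]
  have hd : 0 < mnorm (A - B) := mnorm_pos (sub_ne_zero.mpr hAB)
  have ha : 0 ≤ mnorm A := mnorm_nonneg A
  have hb : 0 ≤ mnorm B := mnorm_nonneg B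
  set d := mnorm (A - B) with hd_def
  set a := mnorm A with ha_def
  set b := mnorm B with hb_def
  have htri1 : a ≤ b + d := by
    have e : A = B + (A - B) := by abel
    calc a = mnorm (B + (A - B)) := by rw [ha_def, ← e]
      _ ≤ b + d := mnorm_add_le _ _
  have htri2 : b ≤ a + d := by
    have e : B = A + -(A - B) := by abel
    calc b = mnorm (A + -(A - B)) := by rw [hb_def, ← e]
      _ ≤ mnorm A + mnorm (-(A - B)) := mnorm_add_le _ _
      _ = a + d := by rw [mnorm_neg]
  -- facts about the path norm
  have hsymt : ∀ t : ℝ, (B + t • (A - B))ᵀ = B + t • (A - B) := fun t => by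
    rw [transpose_add, transpose_smul, hB, hDsym]
  have hpos : ∀ t ∈ Icc (0:ℝ) 1, 0 < mnorm (B + t • (A - B)) := fun t ht =>
    mnorm_pos (hseg t ht)
  have hcont : ContinuousOn (fun t : ℝ => mnorm (B + t • (A - B))) (Icc (0:ℝ) 1) :=
    (continuous_mnorm.comp (continuous_path B (A - B))).continuousOn
  have hub : ∀ t ∈ Icc (0:ℝ) 1, mnorm (B + t • (A - B)) ≤ b + d := by
    intro t ht
    calc mnorm (B + t • (A - B)) ≤ mnorm B + mnorm (t • (A - B)) := mnorm_add_le _ _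
      _ = b + |t| * d := by rw [mnorm_smul]
      _ ≤ b + d := by
          have h1 : |t| = t := abs_of_nonneg ht.1
          nlinarith [ht.2, hd.le]
  have hlb : ∀ t ∈ Icc (0:ℝ) 1, |b - t * d| ≤ mnorm (B + t • (A - B)) := by
    intro t ht
    have htd : mnorm (t • (A - B)) = t * d := by
      rw [mnorm_smul, abs_of_nonneg ht.1]
    have h1 : b ≤ mnorm (B + t • (A - B)) + t * d := by
      have e : B = (B + t • (A - B)) + -(t • (A - B)) := by abel
      calc b = mnorm ((B + t • (A - B)) + -(t • (A - B))) := by rw [hb_def, ← e]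
        _ ≤ mnorm (B + t • (A - B)) + mnorm (-(t • (A - B))) := mnorm_add_le _ _
        _ = mnorm (B + t • (A - B)) + t * d := by rw [mnorm_neg, htd]
    have h2 : t * d ≤ mnorm (B + t • (A - B)) + b := by
      have e : t • (A - B) = (B + t • (A - B)) + -B := by abel
      calc t * d = mnorm ((B + t • (A - B)) + -B) := by rw [← htd, ← e]
        _ ≤ mnorm (B + t • (A - B)) + mnorm (-B) := mnorm_add_le _ _
        _ = mnorm (B + t • (A - B)) + b := by rw [mnorm_neg]
    rw [abs_le]
    constructor <;> linarith
  -- constants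
  have hm1 : 0 < min 1 (p - 1) := lt_min one_pos (by linarith)
  have hm2 : 0 < max 1 (p - 1) := lt_of_lt_of_le one_pos (le_max_left _ _)
  have hcL := cLow_pos p
  have hcU := cUp_pos hp
  have h2q : (0:ℝ) < (2:ℝ) ^ |p - 2| := Real.rpow_pos_of_pos (by norm_num) _
  have h2q' : (0:ℝ) < (2:ℝ) ^ (-|p - 2|) := Real.rpow_pos_of_pos (by norm_num) _
  have h2mul : (2:ℝ) ^ (-|p - 2|) * (2:ℝ) ^ |p - 2| = 1 := by
    rw [← Real.rpow_add (by norm_num : (0:ℝ) < 2)]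
    norm_num
  -- comparability of the two shift weights
  have hYa : (0:ℝ) < δ + a + d := by linarith
  have hYb : (0:ℝ) < δ + b + d := by linarith
  have hcmp1 : (δ + a + d) ^ (p - 2) ≤ (2:ℝ) ^ |p - 2| * (δ + b + d) ^ (p - 2) :=
    rpow_comp2 hYa hYb (by linarith) (by linarith)
  have hcmp2 : (δ + b + d) ^ (p - 2) ≤ (2:ℝ) ^ |p - 2| * (δ + a + d) ^ (p - 2) :=
    rpow_comp2 hYb hYa (by linarith) (by linarith)
  have hqa : (0:ℝ) < (δ + a + d) ^ (p - 2) := Real.rpow_pos_of_pos hYa _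
  have hqb : (0:ℝ) < (δ + b + d) ^ (p - 2) := Real.rpow_pos_of_pos hYb _
  -- integrability of the derivative integrand
  have hfc : ContinuousOn (fderiv ℝ S) {(0:Mat3)}ᶜ :=
    pd.smooth.continuousOn_fderiv_of_isOpen isOpen_compl_singleton le_rfl
  have h1c : ContinuousOn (fun t : ℝ => fderiv ℝ S (B + t • (A - B))) (Icc (0:ℝ) 1) :=
    hfc.comp (continuous_path B (A - B)).continuousOn fun t ht => hseg t ht
  have h2c : Continuous (fun L : Mat3 →L[ℝ] Mat3 => mdot (L (A - B)) (A - B)) := by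
    unfold mdot
    apply continuous_finset_sum
    intro i _
    apply continuous_finset_sum
    intro j _
    exact ((continuous_entry i j).comp (continuous_id.clm_apply continuous_const)).mul
      continuous_const
  have hGc : ContinuousOn (fun t : ℝ => mdot (fderiv ℝ S (B + t • (A - B)) (A - B)) (A - B))
      (Icc (0:ℝ) 1) := h2c.comp_continuousOn h1c
  have hGint : IntervalIntegrable
      (fun t : ℝ => mdot (fderiv ℝ S (B + t • (A - B)) (A - B)) (A - B))
      MeasureTheory.volume 0 1 := by
    apply ContinuousOn.intervalIntegrable
    rwa [Set.uIcc_of_le (by norm_num : (0:ℝ) ≤ 1)]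
  -- continuity of the comparison function
  have hcomp : ContinuousOn (fun t : ℝ => (δ + mnorm (B + t • (A - B))) ^ (p - 2))
      (Icc (0:ℝ) 1) :=
    (continuousOn_const.add hcont).rpow_const fun t ht =>
      Or.inl (ne_of_gt (by show 0 < δ + mnorm (B + t • (A - B)); linarith [hpos t ht]))
  have hcompint : IntervalIntegrable
      (fun t : ℝ => (δ + mnorm (B + t • (A - B))) ^ (p - 2)) MeasureTheory.volume 0 1 := by
    apply ContinuousOn.intervalIntegrable
    rwa [Set.uIcc_of_le (by norm_num : (0:ℝ) ≤ 1)]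
  -- the FTC identity
  have hft := ftc_seg pd A B hseg
  -- pointwise bounds for the integrand
  have hlow : ∀ t ∈ Icc (0:ℝ) 1,
      (κ₀ * min 1 (p - 1) * d ^ 2) * (δ + mnorm (B + t • (A - B))) ^ (p - 2) ≤
        mdot (fderiv ℝ S (B + t • (A - B)) (A - B)) (A - B) := by
    intro t ht
    have hib := (integrand_bounds hp hδ pd (hsymt t) (hseg t ht) hDsym).1
    have hpb := (phi''_bounds hp hδ (hpos t ht).le (by linarith [hpos t ht])).1
    calc (κ₀ * min 1 (p - 1) * d ^ 2) * (δ + mnorm (B + t • (A - B))) ^ (p - 2)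
        = (κ₀ * d ^ 2) * (min 1 (p - 1) * (δ + mnorm (B + t • (A - B))) ^ (p - 2)) := by ring
      _ ≤ (κ₀ * d ^ 2) * phi'' p δ (mnorm (B + t • (A - B))) :=
          mul_le_mul_of_nonneg_left hpb (by positivity)
      _ = κ₀ * phi'' p δ (mnorm (B + t • (A - B))) * d ^ 2 := by ring
      _ ≤ _ := hib
  have hup : ∀ t ∈ Icc (0:ℝ) 1,
      mdot (fderiv ℝ S (B + t • (A - B)) (A - B)) (A - B) ≤
        (9 * κ₁ * max 1 (p - 1) * d ^ 2) * (δ + mnorm (B + t • (A - B))) ^ (p - 2) := by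
    intro t ht
    have hib := (integrand_bounds hp hδ pd (hsymt t) (hseg t ht) hDsym).2
    have hpb := (phi''_bounds hp hδ (hpos t ht).le (by linarith [hpos t ht])).2
    calc mdot (fderiv ℝ S (B + t • (A - B)) (A - B)) (A - B)
        ≤ 9 * κ₁ * phi'' p δ (mnorm (B + t • (A - B))) * d ^ 2 := hib
      _ = (9 * κ₁ * d ^ 2) * phi'' p δ (mnorm (B + t • (A - B))) := by ring
      _ ≤ (9 * κ₁ * d ^ 2) * (max 1 (p - 1) * (δ + mnorm (B + t • (A - B))) ^ (p - 2)) :=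
          mul_le_mul_of_nonneg_left hpb (by positivity)
      _ = (9 * κ₁ * max 1 (p - 1) * d ^ 2) * (δ + mnorm (B + t • (A - B))) ^ (p - 2) := by ring
  constructor
  · -- lower bound
    have hIseg := seg_int_lower hp hδ hb hd hcont hpos hub hlb
    have step1 : (κ₀ * min 1 (p - 1) * d ^ 2) *
        ∫ t in (0:ℝ)..1, (δ + mnorm (B + t • (A - B))) ^ (p - 2) ≤
        ∫ t in (0:ℝ)..1, mdot (fderiv ℝ S (B + t • (A - B)) (A - B)) (A - B) := by
      rw [← intervalIntegral.integral_const_mul]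
      exact intervalIntegral.integral_mono_on (by norm_num)
        (hcompint.const_mul _) hGint hlow
    rw [hft]
    refine le_trans ?_ step1
    have hc1 : (0:ℝ) ≤ κ₀ * min 1 (p - 1) * d ^ 2 := by positivity
    calc cCore p κ₀ * ((δ + a + d) ^ (p - 2) * d ^ 2)
        = (κ₀ * min 1 (p - 1) * d ^ 2) * (cLow p * ((2:ℝ) ^ (-|p - 2|) * (δ + a + d) ^ (p - 2))) := by
          unfold cCore; ring
      _ ≤ (κ₀ * min 1 (p - 1) * d ^ 2) * (cLow p * (δ + b + d) ^ (p - 2)) := by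
          apply mul_le_mul_of_nonneg_left _ hc1
          apply mul_le_mul_of_nonneg_left _ hcL.le
          calc (2:ℝ) ^ (-|p - 2|) * (δ + a + d) ^ (p - 2)
              ≤ (2:ℝ) ^ (-|p - 2|) * ((2:ℝ) ^ |p - 2| * (δ + b + d) ^ (p - 2)) :=
                mul_le_mul_of_nonneg_left hcmp1 h2q'.le
            _ = (δ + b + d) ^ (p - 2) := by rw [← mul_assoc, h2mul, one_mul]
      _ ≤ (κ₀ * min 1 (p - 1) * d ^ 2) *
            ∫ t in (0:ℝ)..1, (δ + mnorm (B + t • (A - B))) ^ (p - 2) := by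
          apply mul_le_mul_of_nonneg_left _ hc1
          exact hIseg
  · -- upper bound
    have hIseg := seg_int_upper hp hδ hb hd hcont hpos hub hlb
    have step1 : (∫ t in (0:ℝ)..1, mdot (fderiv ℝ S (B + t • (A - B)) (A - B)) (A - B)) ≤
        (9 * κ₁ * max 1 (p - 1) * d ^ 2) *
          ∫ t in (0:ℝ)..1, (δ + mnorm (B + t • (A - B))) ^ (p - 2) := by
      rw [← intervalIntegral.integral_const_mul]
      exact intervalIntegral.integral_mono_on (by norm_num)
        hGint (hcompint.const_mul _) hup
    rw [hft]
    refine le_trans step1 ?_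
    have hc1 : (0:ℝ) ≤ 9 * κ₁ * max 1 (p - 1) * d ^ 2 := by positivity
    calc (9 * κ₁ * max 1 (p - 1) * d ^ 2) *
          ∫ t in (0:ℝ)..1, (δ + mnorm (B + t • (A - B))) ^ (p - 2)
        ≤ (9 * κ₁ * max 1 (p - 1) * d ^ 2) * (cUp p * (δ + b + d) ^ (p - 2)) :=
          mul_le_mul_of_nonneg_left hIseg hc1
      _ ≤ (9 * κ₁ * max 1 (p - 1) * d ^ 2) *
            (cUp p * ((2:ℝ) ^ |p - 2| * (δ + a + d) ^ (p - 2))) := by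
          apply mul_le_mul_of_nonneg_left _ hc1
          exact mul_le_mul_of_nonneg_left hcmp2 hcU.le
      _ = CCore p κ₁ * ((δ + a + d) ^ (p - 2) * d ^ 2) := by
          unfold CCore; ring

/-- Core estimate when `A ≠ 0` and `A ≠ B` (possibly degenerate segment, by perturbation). -/
lemma coreA (hp : 1 < p) (hδ : 0 ≤ δ) (hκ₀ : 0 < κ₀) (hκ₁ : 0 < κ₁)
    (pd : PDelta p δ κ₀ κ₁ S) {A B : Mat3} (hA : Aᵀ = A) (hB : Bᵀ = B)
    (hAB : A ≠ B) (hA0 : A ≠ 0) :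
    cCore p κ₀ * ((δ + mnorm A + mnorm (A - B)) ^ (p - 2) * mnorm (A - B) ^ 2) ≤
        mdot (S A - S B) (A - B) ∧
      mdot (S A - S B) (A - B) ≤
        CCore p κ₁ * ((δ + mnorm A + mnorm (A - B)) ^ (p - 2) * mnorm (A - B) ^ 2) := by
  by_cases hgood : ∀ t ∈ Icc (0:ℝ) 1, B + t • (A - B) ≠ 0
  · exact coreGood hp hδ hκ₀ hκ₁ pd hA hB hgood hAB
  -- degenerate case : the segment hits 0
  push_neg at hgood
  obtain ⟨t₀, ht₀, hz⟩ := hgood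
  set V := A - B with hV
  have hV0 : V ≠ 0 := sub_ne_zero.mpr hAB
  have hVsym : Vᵀ = V := by rw [hV, transpose_sub, hA, hB]
  have hBt : B = (-t₀) • V := by
    have : B + t₀ • V = 0 := hz
    rw [neg_smul]
    linear_combination (norm := module) this
  have ht₀1 : t₀ ≠ 1 := by
    intro h1
    apply hA0
    have : B + V = A := by rw [hV]; abel
    rw [← this, hBt, h1, neg_smul, one_smul, neg_add_cancel]
  -- choose a symmetric direction E with mdot V E = 0, E ≠ 0
  obtain ⟨E, hEsym, hVE, hE0⟩ : ∃ E : Mat3, Eᵀ = E ∧ mdot V E = 0 ∧ E ≠ 0 := by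
    classical
    set F : Mat3 := Matrix.single 0 0 1 with hF
    set G : Mat3 := Matrix.single 1 1 1 with hG
    have hFsym : Fᵀ = F := by
      ext i j
      fin_cases i <;> fin_cases j <;> simp [hF, Matrix.single, Matrix.transpose_apply]
    have hGsym : Gᵀ = G := by
      ext i j
      fin_cases i <;> fin_cases j <;> simp [hG, Matrix.single, Matrix.transpose_apply]
    have hFG : mdot F G = 0 := by
      simp [mdot, hF, hG, Matrix.single, Fin.sum_univ_succ]
    have hGG : mdot G G = 1 := by
      simp [mdot, hF, hG, Matrix.single, Fin.sum_univ_succ]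
    by_cases hVF : mdot V F = 0
    · refine ⟨F, hFsym, hVF, ?_⟩
      intro h0
      have := congrFun (congrFun h0 0) 0
      simp [hF, Matrix.single] at this
    · refine ⟨(mdot V G) • F + (-(mdot V F)) • G, ?_, ?_, ?_⟩
      · rw [transpose_add, transpose_smul, transpose_smul, hFsym, hGsym]
      · rw [mdot_add_right, mdot_smul_right, mdot_smul_right]
        ring
      · intro h0
        have h1 : mdot ((mdot V G) • F + (-(mdot V F)) • G) G = -(mdot V F) := by
          rw [mdot_comm, mdot_add_right, mdot_smul_right, mdot_smul_right,
            mdot_comm G F, hFG, hGG]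
          ring
        rw [h0] at h1
        rw [mdot_comm, mdot_zero_right] at h1
        exact hVF (by linarith [h1])
  have hEE : 0 < mdot E E := mdot_self_pos hE0
  have hVV : 0 < mdot V V := mdot_self_pos hV0
  -- the perturbed points
  set Bn : ℕ → Mat3 := fun n => B + (1/(n+1 : ℝ)) • E with hBn
  have hεpos : ∀ n : ℕ, 0 < (1/(n+1 : ℝ)) := fun n => by positivity
  have hBnsym : ∀ n, (Bn n)ᵀ = Bn n := fun n => by
    rw [hBn, transpose_add, transpose_smul, hB, hEsym]
  have hANBn : ∀ n, A - Bn n = V - (1/(n+1 : ℝ)) • E := fun n => by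
    rw [hBn, hV]; module
  have hABn : ∀ n, A ≠ Bn n := by
    intro n h0
    have h1 : V - (1/(n+1 : ℝ)) • E = 0 := by rw [← hANBn n, h0, sub_self]
    have h2 : mdot (V - (1/(n+1 : ℝ)) • E) E = -((1/(n+1 : ℝ)) * mdot E E) := by
      rw [mdot_sub_left, hVE]
      rw [mdot_comm _ E, mdot_smul_right, mdot_comm E E]
      ring
    rw [h1, mdot_comm, mdot_zero_right] at h2
    nlinarith [hεpos n, hEE]
  have hsegn : ∀ n, ∀ t ∈ Icc (0:ℝ) 1, Bn n + t • (A - Bn n) ≠ 0 := by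
    intro n t ht h0
    have hAeq : A = (1 - t₀) • V := by
      have h1 : A = B + V := by rw [hV]; abel
      rw [h1, hBt]
      match_scalars <;> ring
    have hpt : Bn n + t • (A - Bn n) =
        (t - t₀) • V + ((1 - t) * (1/(n+1 : ℝ))) • E := by
      simp only [hBn]
      rw [hAeq, hBt]
      match_scalars <;> ring
    rw [hpt] at h0
    have e1 : mdot ((t - t₀) • V + ((1 - t) * (1/(n+1 : ℝ))) • E) V = (t - t₀) * mdot V V := by
      rw [mdot_comm, mdot_add_right, mdot_smul_right, mdot_smul_right, mdot_comm V V]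
      rw [hVE]
      ring
    have e2 : mdot ((t - t₀) • V + ((1 - t) * (1/(n+1 : ℝ))) • E) E =
        ((1 - t) * (1/(n+1 : ℝ))) * mdot E E := by
      rw [mdot_comm, mdot_add_right, mdot_smul_right, mdot_smul_right]
      rw [mdot_comm E V, hVE, mdot_comm E E]
      ring
    rw [h0, mdot_comm, mdot_zero_right] at e1 e2
    have htt₀ : t = t₀ := by
      rcases mul_eq_zero.mp e1.symm with h | h
      · linarith [sub_eq_zero.mp h]
      · exact absurd h hVV.ne'
    have ht1 : t = 1 := by
      rcases mul_eq_zero.mp e2.symm with h | h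
      · rcases mul_eq_zero.mp h with h' | h'
        · linarith
        · exact absurd h' (hεpos n).ne'
      · exact absurd h hEE.ne'
    exact ht₀1 (by rw [← htt₀, ht1])
  -- apply the good-case estimate along the perturbed segments
  have hest := fun n => coreGood hp hδ hκ₀ hκ₁ pd hA (hBnsym n) (hsegn n) (hABn n)
  -- limits
  have hεlim : Filter.Tendsto (fun n : ℕ => (1/(n+1 : ℝ))) Filter.atTop (nhds 0) :=
    tendsto_one_div_add_atTop_nhds_zero_nat
  have hBlim : Filter.Tendsto Bn Filter.atTop (nhds B) := by
    have h1 : Filter.Tendsto (fun n : ℕ => (1/(n+1 : ℝ)) • E) Filter.atTop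
        (nhds ((0:ℝ) • E)) :=
      ((continuous_id.smul (continuous_const : Continuous fun _ : ℝ => E)).tendsto 0).comp hεlim
    rw [zero_smul] at h1
    have h2 := h1.const_add B
    simpa [hBn] using h2
  have hdlim : Filter.Tendsto (fun n => mnorm (A - Bn n)) Filter.atTop
      (nhds (mnorm (A - B))) :=
    ((continuous_mnorm.comp (continuous_const.sub continuous_id)).tendsto B).comp hBlim
  have hmlim : Filter.Tendsto (fun n => mdot (S A - S (Bn n)) (A - Bn n)) Filter.atTop
      (nhds (mdot (S A - S B) (A - B))) := by
    have hc : Continuous fun M : Mat3 => mdot (S A - S M) (A - M) :=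
      continuous_mdot_pair.comp ((continuous_const.sub pd.cont).prodMk
        (continuous_const.sub continuous_id))
    exact (hc.tendsto B).comp hBlim
  have hd : 0 < mnorm (A - B) := mnorm_pos hV0
  have hYa : 0 < δ + mnorm A + mnorm (A - B) := by
    linarith [mnorm_nonneg A]
  have hglim : Filter.Tendsto
      (fun n => (δ + mnorm A + mnorm (A - Bn n)) ^ (p - 2) * mnorm (A - Bn n) ^ 2)
      Filter.atTop
      (nhds ((δ + mnorm A + mnorm (A - B)) ^ (p - 2) * mnorm (A - B) ^ 2)) := by
    have hg : ContinuousAt (fun x : ℝ => (δ + mnorm A + x) ^ (p - 2) * x ^ 2)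
        (mnorm (A - B)) := by
      apply ContinuousAt.mul
      · exact (Real.continuousAt_rpow_const _ _ (Or.inl hYa.ne')).comp
          ((continuous_const.add continuous_id).continuousAt)
      · exact (continuous_pow 2).continuousAt
    exact hg.tendsto.comp hdlim
  constructor
  · refine le_of_tendsto_of_tendsto' (tendsto_const_nhds.mul hglim) hmlim fun n => ?_
    exact (hest n).1
  · refine le_of_tendsto_of_tendsto' hmlim (tendsto_const_nhds.mul hglim) fun n => ?_
    exact (hest n).2

/-- Core estimate, all cases. -/
lemma coreAll (hp : 1 < p) (hδ : 0 ≤ δ) (hκ₀ : 0 < κ₀) (hκ₁ : 0 < κ₁)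
    (pd : PDelta p δ κ₀ κ₁ S)
    {A B : Mat3} (hA : Aᵀ = A) (hB : Bᵀ = B) :
    cCore p κ₀ * (2:ℝ) ^ (-|p - 2|) *
        ((δ + mnorm A + mnorm (A - B)) ^ (p - 2) * mnorm (A - B) ^ 2) ≤
        mdot (S A - S B) (A - B) ∧
      mdot (S A - S B) (A - B) ≤
        CCore p κ₁ * (2:ℝ) ^ |p - 2| *
          ((δ + mnorm A + mnorm (A - B)) ^ (p - 2) * mnorm (A - B) ^ 2) := by
  have h2q : (0:ℝ) < (2:ℝ) ^ |p - 2| := Real.rpow_pos_of_pos (by norm_num) _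
  have h2q' : (0:ℝ) < (2:ℝ) ^ (-|p - 2|) := Real.rpow_pos_of_pos (by norm_num) _
  have h2le1 : (2:ℝ) ^ (-|p - 2|) ≤ 1 :=
    Real.rpow_le_one_of_one_le_of_nonpos (by norm_num) (neg_nonpos.mpr (abs_nonneg _))
  have h2ge1 : (1:ℝ) ≤ (2:ℝ) ^ |p - 2| := by
    have := Real.rpow_le_rpow_of_exponent_le (by norm_num : (1:ℝ) ≤ 2)
      (abs_nonneg (p - 2))
    rwa [Real.rpow_zero] at this
  have h2mul : (2:ℝ) ^ (-|p - 2|) * (2:ℝ) ^ |p - 2| = 1 := by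
    rw [← Real.rpow_add (by norm_num : (0:ℝ) < 2)]
    norm_num
  have hcC := cCore_pos (κ₀ := κ₀) hp hκ₀
  have hCC := CCore_pos (κ₁ := κ₁) hp hκ₁
  rcases eq_or_ne A B with rfl | hAB
  · constructor <;> simp [sub_self, mnorm_zero, mdot_zero_right]
  have hd : 0 < mnorm (A - B) := mnorm_pos (sub_ne_zero.mpr hAB)
  have hΦ : (0:ℝ) ≤ (δ + mnorm A + mnorm (A - B)) ^ (p - 2) * mnorm (A - B) ^ 2 :=
    mul_nonneg (Real.rpow_nonneg (by linarith [mnorm_nonneg A]) _) (sq_nonneg _)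
  by_cases hA0 : A ≠ 0
  · have h := coreA hp hδ hκ₀ hκ₁ pd hA hB hAB hA0
    constructor
    · refine le_trans ?_ h.1
      apply mul_le_mul_of_nonneg_right _ hΦ
      nlinarith
    · refine le_trans h.2 ?_
      apply mul_le_mul_of_nonneg_right _ hΦ
      nlinarith
  · push_neg at hA0
    have hB0 : B ≠ 0 := fun h0 => hAB (by rw [hA0, h0])
    have h := coreA hp hδ hκ₀ hκ₁ pd hB hA (Ne.symm hAB) hB0
    have hswap : mdot (S B - S A) (B - A) = mdot (S A - S B) (A - B) := by
      rw [show S B - S A = -(S A - S B) from (neg_sub _ _).symm,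
          show B - A = -(A - B) from (neg_sub _ _).symm, mdot_neg_neg]
    have hnn : mnorm (B - A) = mnorm (A - B) := mnorm_sub_comm B A
    rw [hswap, hnn] at h
    -- compare the two shifted weights
    have ha : 0 ≤ mnorm A := mnorm_nonneg A
    have hb : 0 ≤ mnorm B := mnorm_nonneg B
    have htri1 : mnorm A ≤ mnorm B + mnorm (A - B) := by
      have e : A = B + (A - B) := by abel
      calc mnorm A = mnorm (B + (A - B)) := by rw [← e]
        _ ≤ mnorm B + mnorm (A - B) := mnorm_add_le _ _
    have htri2 : mnorm B ≤ mnorm A + mnorm (A - B) := by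
      have e : B = A + -(A - B) := by abel
      calc mnorm B = mnorm (A + -(A - B)) := by rw [← e]
        _ ≤ mnorm A + mnorm (-(A - B)) := mnorm_add_le _ _
        _ = mnorm A + mnorm (A - B) := by rw [mnorm_neg]
    have hYa : (0:ℝ) < δ + mnorm A + mnorm (A - B) := by linarith
    have hYb : (0:ℝ) < δ + mnorm B + mnorm (A - B) := by linarith
    have hcmp1 : (δ + mnorm A + mnorm (A - B)) ^ (p - 2) ≤
        (2:ℝ) ^ |p - 2| * (δ + mnorm B + mnorm (A - B)) ^ (p - 2) :=
      rpow_comp2 hYa hYb (by linarith) (by linarith)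
    have hcmp2 : (δ + mnorm B + mnorm (A - B)) ^ (p - 2) ≤
        (2:ℝ) ^ |p - 2| * (δ + mnorm A + mnorm (A - B)) ^ (p - 2) :=
      rpow_comp2 hYb hYa (by linarith) (by linarith)
    constructor
    · refine le_trans ?_ h.1
      calc cCore p κ₀ * (2:ℝ) ^ (-|p - 2|) *
            ((δ + mnorm A + mnorm (A - B)) ^ (p - 2) * mnorm (A - B) ^ 2)
          = (cCore p κ₀ * mnorm (A - B) ^ 2) *
            ((2:ℝ) ^ (-|p - 2|) * (δ + mnorm A + mnorm (A - B)) ^ (p - 2)) := by ring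
        _ ≤ (cCore p κ₀ * mnorm (A - B) ^ 2) *
            (δ + mnorm B + mnorm (A - B)) ^ (p - 2) := by
            apply mul_le_mul_of_nonneg_left _ (by positivity)
            calc (2:ℝ) ^ (-|p - 2|) * (δ + mnorm A + mnorm (A - B)) ^ (p - 2)
                ≤ (2:ℝ) ^ (-|p - 2|) *
                  ((2:ℝ) ^ |p - 2| * (δ + mnorm B + mnorm (A - B)) ^ (p - 2)) :=
                  mul_le_mul_of_nonneg_left hcmp1 h2q'.le
              _ = (δ + mnorm B + mnorm (A - B)) ^ (p - 2) := by
                  rw [← mul_assoc, h2mul, one_mul]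
        _ = cCore p κ₀ * ((δ + mnorm B + mnorm (A - B)) ^ (p - 2) * mnorm (A - B) ^ 2) := by
            ring
    · refine le_trans h.2 ?_
      calc CCore p κ₁ * ((δ + mnorm B + mnorm (A - B)) ^ (p - 2) * mnorm (A - B) ^ 2)
          = (CCore p κ₁ * mnorm (A - B) ^ 2) * (δ + mnorm B + mnorm (A - B)) ^ (p - 2) := by
            ring
        _ ≤ (CCore p κ₁ * mnorm (A - B) ^ 2) *
            ((2:ℝ) ^ |p - 2| * (δ + mnorm A + mnorm (A - B)) ^ (p - 2)) :=
            mul_le_mul_of_nonneg_left hcmp2 (by positivity)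
        _ = CCore p κ₁ * (2:ℝ) ^ |p - 2| *
            ((δ + mnorm A + mnorm (A - B)) ^ (p - 2) * mnorm (A - B) ^ 2) := by ring

end Core

end Hammer

/-- Hammer estimate: for `S` with `(p,δ)`-structure,
`(S(P) − S(Q))·(P − Q) ∼ φ_{|P^sym|}(|P^sym − Q^sym|)` with constants depending only on
the characteristics `(κ₀, κ₁, p)` of `S`. -/
theorem hammer_shifted (p κ₀ κ₁ : ℝ) (hp : 1 < p) (hκ₀ : 0 < κ₀) (hκ₁ : 0 < κ₁) :
    ∃ c C : ℝ, 0 < c ∧ 0 < C ∧ ∀ δ : ℝ, 0 ≤ δ → ∀ S : Mat3 → Mat3,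
      PDelta p δ κ₀ κ₁ S → ∀ P Q : Mat3,
        c * phiShift p δ (mnorm (msym P)) (mnorm (msym P - msym Q)) ≤
            mdot (S P - S Q) (P - Q) ∧
        mdot (S P - S Q) (P - Q) ≤
            C * phiShift p δ (mnorm (msym P)) (mnorm (msym P - msym Q)) := by
  classical
  refine ⟨Hammer.cCore p κ₀ * (2:ℝ) ^ (-|p - 2|) / Hammer.cPhiUp p,
    Hammer.CCore p κ₁ * (2:ℝ) ^ |p - 2| / Hammer.cPhiLow p, ?_, ?_, ?_⟩
  · have := Hammer.cCore_pos hp hκ₀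
    have := Hammer.cPhiUp_pos p
    positivity
  · have := Hammer.CCore_pos hp hκ₁
    have := Hammer.cPhiLow_pos hp
    positivity
  intro δ hδ S pd P Q
  set A := msym P with hAdef
  set B := msym Q with hBdef
  have hA : Aᵀ = A := Hammer.msym_transpose P
  have hB : Bᵀ = B := Hammer.msym_transpose Q
  -- rewrite both sides in terms of A, B
  have hSP : S P = S A := pd.symdep P
  have hSQ : S Q = S B := pd.symdep Q
  have hsymm : (S A - S B)ᵀ = S A - S B := by
    rw [transpose_sub]
    rw [← hSP, ← hSQ, pd.symval P, pd.symval Q]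
  have hmdot : mdot (S P - S Q) (P - Q) = mdot (S A - S B) (A - B) := by
    rw [hSP, hSQ]
    rw [← Hammer.mdot_msym_right hsymm (P - Q), Hammer.msym_sub]
  have core := Hammer.coreAll hp hδ hκ₀ hκ₁ pd hA hB
  have hps := Hammer.phiShift_bounds hp hδ (Hammer.mnorm_nonneg A)
    (Hammer.mnorm_nonneg (A - B))
  rw [hmdot]
  have hΦ : (0:ℝ) ≤ (δ + mnorm A + mnorm (A - B)) ^ (p - 2) * mnorm (A - B) ^ 2 := by
    have h1 : (0:ℝ) ≤ δ + mnorm A + mnorm (A - B) := by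
      have := Hammer.mnorm_nonneg A; have := Hammer.mnorm_nonneg (A - B); linarith
    positivity
  have hup := Hammer.cPhiUp_pos p
  have hlo := Hammer.cPhiLow_pos hp
  constructor
  · calc Hammer.cCore p κ₀ * (2:ℝ) ^ (-|p - 2|) / Hammer.cPhiUp p *
        phiShift p δ (mnorm A) (mnorm (A - B))
        ≤ Hammer.cCore p κ₀ * (2:ℝ) ^ (-|p - 2|) / Hammer.cPhiUp p *
          (Hammer.cPhiUp p * ((δ + mnorm A + mnorm (A - B)) ^ (p - 2) * mnorm (A - B) ^ 2)) := by
          apply mul_le_mul_of_nonneg_left hps.2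
          have := Hammer.cCore_pos hp hκ₀
          positivity
      _ = Hammer.cCore p κ₀ * (2:ℝ) ^ (-|p - 2|) *
          ((δ + mnorm A + mnorm (A - B)) ^ (p - 2) * mnorm (A - B) ^ 2) := by
          field_simp
      _ ≤ mdot (S A - S B) (A - B) := core.1
  · calc mdot (S A - S B) (A - B)
        ≤ Hammer.CCore p κ₁ * (2:ℝ) ^ |p - 2| *
          ((δ + mnorm A + mnorm (A - B)) ^ (p - 2) * mnorm (A - B) ^ 2) := core.2
      _ ≤ Hammer.CCore p κ₁ * (2:ℝ) ^ |p - 2| * (phiShift p δ (mnorm A) (mnorm (A - B)) /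
          Hammer.cPhiLow p) := by
          apply mul_le_mul_of_nonneg_left _ (le_of_lt (by
            have := Hammer.CCore_pos hp hκ₁; positivity))
          rw [le_div_iff₀ hlo]
          calc (δ + mnorm A + mnorm (A - B)) ^ (p - 2) * mnorm (A - B) ^ 2 * Hammer.cPhiLow p
              = Hammer.cPhiLow p * ((δ + mnorm A + mnorm (A - B)) ^ (p - 2) *
                mnorm (A - B) ^ 2) := by ring
            _ ≤ phiShift p δ (mnorm A) (mnorm (A - B)) := hps.1
      _ = Hammer.CCore p κ₁ * (2:ℝ) ^ |p - 2| / Hammer.cPhiLow p *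
          phiShift p δ (mnorm A) (mnorm (A - B)) := by ring
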